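/- arXiv:1901.05955 — 8 statements merged into one kernel-verified Lean document; each statement's English description precedes it below -/
import Mathlib

section
/- Let W, X, Y be discrete random variables with W taking values in [0,1], X taking nonnegative real values, and Y real-valued. Suppose for some 0 ≤ ε ≤ 1 and d ≥ 0 we have E[XY] = (1 ± ε)·d·E[X] and E[XY²] ≤ (1+ε)·d²·E[X], and suppose E[WX] > 0. Then |E[WXY] − d·E[WX]| ≤ (ε + 2·√(ε·E[X]/E[WX]))·d·E[WX]. -/
open Finset

/-- Lemma `ECSdist`, first moment: on a finite probability space with
probability mass function `μ`, if `W ∈ [0,1]`, `X ≥ 0`, `E[XY] = (1 ± ε)·d·E[X]`,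
`E[XY²] ≤ (1+ε)·d²·E[X]` and `E[WX] > 0`, then
`|E[WXY] − d·E[WX]| ≤ (ε + 2√(ε·E[X]/E[WX]))·d·E[WX]`. -/
theorem ecs_dist_first_moment {Ω : Type*} [Fintype Ω] (μ W X Y : Ω → ℝ)
    (hμ0 : ∀ ω, 0 ≤ μ ω) (hμ1 : (∑ ω, μ ω) = 1)
    (hW0 : ∀ ω, 0 ≤ W ω) (hW1 : ∀ ω, W ω ≤ 1) (hX : ∀ ω, 0 ≤ X ω)
    {ε d : ℝ} (hε0 : 0 ≤ ε) (hε1 : ε ≤ 1) (hd : 0 ≤ d)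
    (hXY : |(∑ ω, μ ω * (X ω * Y ω)) - d * (∑ ω, μ ω * X ω)|
      ≤ ε * (d * (∑ ω, μ ω * X ω)))
    (hXY2 : (∑ ω, μ ω * (X ω * Y ω ^ 2)) ≤ (1 + ε) * d ^ 2 * (∑ ω, μ ω * X ω))
    (hWX : 0 < ∑ ω, μ ω * (W ω * X ω)) :
    |(∑ ω, μ ω * (W ω * X ω * Y ω)) - d * (∑ ω, μ ω * (W ω * X ω))|
      ≤ (ε + 2 * Real.sqrt (ε * (∑ ω, μ ω * X ω) / (∑ ω, μ ω * (W ω * X ω))))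
        * (d * (∑ ω, μ ω * (W ω * X ω))) := by
  set A := ∑ ω, μ ω * X ω with hAdef
  set B := ∑ ω, μ ω * (W ω * X ω) with hBdef
  set S := ∑ ω, μ ω * (W ω * X ω * Y ω) with hSdef
  have hBA : B ≤ A := by
    apply Finset.sum_le_sum
    intro ω _
    have h1 := hμ0 ω; have h2 := hX ω; have h3 := hW1 ω; have h4 := hW0 ω
    nlinarith [mul_nonneg (mul_nonneg h1 h2) (sub_nonneg.mpr h3)]
  have hA0 : 0 < A := lt_of_lt_of_le hWX hBA
  have hT : (1 - ε) * (d * A) ≤ ∑ ω, μ ω * (X ω * Y ω) := by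
    have h := (abs_le.mp hXY).1
    nlinarith
  have hXZ2 : ∑ ω, μ ω * (X ω * (Y ω - d) ^ 2) ≤ 3 * ε * d ^ 2 * A := by
    have expand : ∑ ω, μ ω * (X ω * (Y ω - d) ^ 2)
        = (∑ ω, μ ω * (X ω * Y ω ^ 2)) - 2 * d * (∑ ω, μ ω * (X ω * Y ω))
          + d ^ 2 * A := by
      rw [hAdef, Finset.mul_sum, Finset.mul_sum, ← Finset.sum_sub_distrib,
        ← Finset.sum_add_distrib]
      exact Finset.sum_congr rfl fun ω _ => by ring
    rw [expand]
    nlinarith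
  have hWXZ2 : ∑ ω, μ ω * (W ω * X ω * (Y ω - d) ^ 2) ≤ 3 * ε * d ^ 2 * A := by
    refine le_trans (Finset.sum_le_sum fun ω _ => ?_) hXZ2
    have h1 := hμ0 ω; have h2 := hX ω; have h3 := hW1 ω; have h4 := hW0 ω
    nlinarith [mul_nonneg (mul_nonneg (mul_nonneg h1 h2) (sub_nonneg.mpr h3)) (sq_nonneg (Y ω - d))]
  -- Cauchy–Schwarz
  have hCS : (S - d * B) ^ 2 ≤ B * (3 * ε * d ^ 2 * A) := by
    have key : S - d * B
        = ∑ ω, Real.sqrt (μ ω * (W ω * X ω))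
            * (Real.sqrt (μ ω * (W ω * X ω)) * (Y ω - d)) := by
      rw [hSdef, hBdef, Finset.mul_sum, ← Finset.sum_sub_distrib]
      refine Finset.sum_congr rfl fun ω _ => ?_
      have h0 : 0 ≤ μ ω * (W ω * X ω) :=
        mul_nonneg (hμ0 ω) (mul_nonneg (hW0 ω) (hX ω))
      rw [show Real.sqrt (μ ω * (W ω * X ω)) * (Real.sqrt (μ ω * (W ω * X ω)) * (Y ω - d))
          = Real.sqrt (μ ω * (W ω * X ω)) * Real.sqrt (μ ω * (W ω * X ω)) * (Y ω - d) by ring,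
        Real.mul_self_sqrt h0]
      ring
    have cs := Finset.sum_mul_sq_le_sq_mul_sq Finset.univ
      (fun ω => Real.sqrt (μ ω * (W ω * X ω)))
      (fun ω => Real.sqrt (μ ω * (W ω * X ω)) * (Y ω - d))
    have e1 : ∑ ω, (Real.sqrt (μ ω * (W ω * X ω))) ^ 2 = B := by
      rw [hBdef]
      refine Finset.sum_congr rfl fun ω _ => ?_
      exact Real.sq_sqrt (mul_nonneg (hμ0 ω) (mul_nonneg (hW0 ω) (hX ω)))
    have e2 : ∑ ω, (Real.sqrt (μ ω * (W ω * X ω)) * (Y ω - d)) ^ 2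
        = ∑ ω, μ ω * (W ω * X ω * (Y ω - d) ^ 2) := by
      refine Finset.sum_congr rfl fun ω _ => ?_
      rw [mul_pow, Real.sq_sqrt (mul_nonneg (hμ0 ω) (mul_nonneg (hW0 ω) (hX ω)))]
      ring
    rw [key]
    calc (∑ ω, Real.sqrt (μ ω * (W ω * X ω))
            * (Real.sqrt (μ ω * (W ω * X ω)) * (Y ω - d))) ^ 2
        ≤ (∑ ω, (Real.sqrt (μ ω * (W ω * X ω))) ^ 2)
            * ∑ ω, (Real.sqrt (μ ω * (W ω * X ω)) * (Y ω - d)) ^ 2 := cs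
      _ ≤ B * (3 * ε * d ^ 2 * A) := by
          rw [e1, e2]
          exact mul_le_mul_of_nonneg_left hWXZ2 hWX.le
  have hsqrtAB : Real.sqrt (ε * A / B) * B = Real.sqrt (ε * A * B) := by
    rw [show (B : ℝ) = Real.sqrt (B ^ 2) by rw [Real.sqrt_sq hWX.le],
      ← Real.sqrt_mul (by positivity)]
    rw [Real.sqrt_sq hWX.le]
    congr 1
    field_simp
  have habs : |S - d * B| ≤ 2 * d * Real.sqrt (ε * A * B) := by
    have hsq : (S - d * B) ^ 2 ≤ (2 * d * Real.sqrt (ε * A * B)) ^ 2 := by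
      have : (2 * d * Real.sqrt (ε * A * B)) ^ 2 = 4 * d ^ 2 * (ε * A * B) := by
        rw [mul_pow, mul_pow, Real.sq_sqrt (by positivity)]
        ring
      rw [this]
      nlinarith
    calc |S - d * B| = Real.sqrt ((S - d * B) ^ 2) := (Real.sqrt_sq_eq_abs _).symm
      _ ≤ Real.sqrt ((2 * d * Real.sqrt (ε * A * B)) ^ 2) := Real.sqrt_le_sqrt hsq
      _ = 2 * d * Real.sqrt (ε * A * B) := Real.sqrt_sq (by positivity)
  have hfinal : 2 * d * Real.sqrt (ε * A * B)
      ≤ (ε + 2 * Real.sqrt (ε * A / B)) * (d * B) := by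
    have : (ε + 2 * Real.sqrt (ε * A / B)) * (d * B)
        = ε * (d * B) + 2 * d * (Real.sqrt (ε * A / B) * B) := by ring
    rw [this, hsqrtAB]
    nlinarith [mul_nonneg hε0 (mul_nonneg hd hWX.le)]
  exact habs.trans hfinal
end

section
/- Let W, X, Y be discrete random variables with W taking values in [0,1], X taking nonnegative real values, and Y real-valued. Suppose for some 0 ≤ ε ≤ 1 and d ≥ 0 we have E[XY] = (1 ± ε)·d·E[X] and E[XY²] ≤ (1+ε)·d²·E[X], and suppose E[WX] > 0. Then |E[WXY²] − d²·E[WX]| ≤ (2ε + 7·√ε·E[X]/E[WX])·d²·E[WX]. -/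
set_option maxHeartbeats 800000


open Finset

/-- Lemma `ECSdist`, second moment: on a finite probability space with
probability mass function `μ`, if `W ∈ [0,1]`, `X ≥ 0`, `E[XY] = (1 ± ε)·d·E[X]`,
`E[XY²] ≤ (1+ε)·d²·E[X]` and `E[WX] > 0`, then
`|E[WXY²] − d²·E[WX]| ≤ (2ε + 7√ε·E[X]/E[WX])·d²·E[WX]`. -/
theorem ecs_dist_second_moment {Ω : Type*} [Fintype Ω] (μ W X Y : Ω → ℝ)
    (hμ0 : ∀ ω, 0 ≤ μ ω) (hμ1 : (∑ ω, μ ω) = 1)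
    (hW0 : ∀ ω, 0 ≤ W ω) (hW1 : ∀ ω, W ω ≤ 1) (hX : ∀ ω, 0 ≤ X ω)
    {ε d : ℝ} (hε0 : 0 ≤ ε) (hε1 : ε ≤ 1) (hd : 0 ≤ d)
    (hXY : |(∑ ω, μ ω * (X ω * Y ω)) - d * (∑ ω, μ ω * X ω)|
      ≤ ε * (d * (∑ ω, μ ω * X ω)))
    (hXY2 : (∑ ω, μ ω * (X ω * Y ω ^ 2)) ≤ (1 + ε) * d ^ 2 * (∑ ω, μ ω * X ω))
    (hWX : 0 < ∑ ω, μ ω * (W ω * X ω)) :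
    |(∑ ω, μ ω * (W ω * X ω * Y ω ^ 2)) - d ^ 2 * (∑ ω, μ ω * (W ω * X ω))|
      ≤ (2 * ε + 7 * Real.sqrt ε * (∑ ω, μ ω * X ω) / (∑ ω, μ ω * (W ω * X ω)))
        * (d ^ 2 * (∑ ω, μ ω * (W ω * X ω))) := by
  set EX := ∑ ω, μ ω * X ω with hEXdef
  set EWX := ∑ ω, μ ω * (W ω * X ω) with hEWXdef
  have hEXnn : 0 ≤ EX := Finset.sum_nonneg fun ω _ => mul_nonneg (hμ0 ω) (hX ω)
  have hle : EWX ≤ EX := Finset.sum_le_sum fun ω _ => by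
    have h := mul_nonneg (hμ0 ω) (mul_nonneg (hX ω) (sub_nonneg.mpr (hW1 ω)))
    nlinarith
  have hEXY : (1 - ε) * (d * EX) ≤ ∑ ω, μ ω * (X ω * Y ω) := by
    have h := (abs_le.mp hXY).1
    linarith
  -- variance bound
  have hvar : ∑ ω, μ ω * (X ω * (Y ω - d) ^ 2) ≤ 3 * ε * d ^ 2 * EX := by
    have hid : ∑ ω, μ ω * (X ω * (Y ω - d) ^ 2)
        = (∑ ω, μ ω * (X ω * Y ω ^ 2)) - 2 * d * (∑ ω, μ ω * (X ω * Y ω))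
          + d ^ 2 * EX := by
      rw [hEXdef, Finset.mul_sum, Finset.mul_sum, ← Finset.sum_sub_distrib,
        ← Finset.sum_add_distrib]
      exact Finset.sum_congr rfl fun ω _ => by ring
    rw [hid]
    nlinarith [mul_le_mul_of_nonneg_left hEXY (by linarith : (0:ℝ) ≤ 2 * d)]
  set V := ∑ ω, μ ω * (W ω * X ω * (Y ω - d) ^ 2) with hVdef
  set T := ∑ ω, μ ω * (W ω * X ω * (Y ω - d)) with hTdef
  have hVnn : 0 ≤ V := Finset.sum_nonneg fun ω _ =>
    mul_nonneg (hμ0 ω) (mul_nonneg (mul_nonneg (hW0 ω) (hX ω)) (sq_nonneg _))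
  have hVle : V ≤ ∑ ω, μ ω * (X ω * (Y ω - d) ^ 2) :=
    Finset.sum_le_sum fun ω _ => by
      have h := mul_nonneg (hμ0 ω) (mul_nonneg (mul_nonneg (sub_nonneg.mpr (hW1 ω)) (hX ω))
        (sq_nonneg (Y ω - d)))
      nlinarith
  have hV3 : V ≤ 3 * ε * d ^ 2 * EX := hVle.trans hvar
  -- Cauchy–Schwarz
  have hCS : T ^ 2 ≤ EWX * V := by
    have key := Finset.sum_mul_sq_le_sq_mul_sq Finset.univ
      (fun ω => Real.sqrt (μ ω * (W ω * X ω)))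
      (fun ω => Real.sqrt (μ ω * (W ω * X ω)) * (Y ω - d))
    have hnn : ∀ ω, 0 ≤ μ ω * (W ω * X ω) := fun ω =>
      mul_nonneg (hμ0 ω) (mul_nonneg (hW0 ω) (hX ω))
    have e1 : ∀ ω : Ω, Real.sqrt (μ ω * (W ω * X ω)) *
        (Real.sqrt (μ ω * (W ω * X ω)) * (Y ω - d)) = μ ω * (W ω * X ω * (Y ω - d)) := by
      intro ω
      rw [← mul_assoc, Real.mul_self_sqrt (hnn ω)]
      ring
    have e2 : ∀ ω : Ω, (Real.sqrt (μ ω * (W ω * X ω))) ^ 2 = μ ω * (W ω * X ω) := fun ω =>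
      Real.sq_sqrt (hnn ω)
    have e3 : ∀ ω : Ω, (Real.sqrt (μ ω * (W ω * X ω)) * (Y ω - d)) ^ 2
        = μ ω * (W ω * X ω * (Y ω - d) ^ 2) := by
      intro ω
      rw [mul_pow, e2 ω]
      ring
    simp only [e1, e2, e3] at key
    exact key
  have hT2 : T ^ 2 ≤ 3 * ε * d ^ 2 * EX ^ 2 := by
    have h1 : EWX * V ≤ EX * V := mul_le_mul_of_nonneg_right hle hVnn
    have h2 : EX * V ≤ EX * (3 * ε * d ^ 2 * EX) := mul_le_mul_of_nonneg_left hV3 hEXnn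
    nlinarith
  have hsε : Real.sqrt ε ≤ 1 := Real.sqrt_le_one.2 hε1
  have hsεnn : 0 ≤ Real.sqrt ε := Real.sqrt_nonneg ε
  have hεsε : ε ≤ Real.sqrt ε := by
    nlinarith [Real.sq_sqrt hε0]
  have hTb : |T| ≤ 2 * Real.sqrt ε * (d * EX) := by
    have hsq : T ^ 2 ≤ (2 * Real.sqrt ε * (d * EX)) ^ 2 := by
      have : (2 * Real.sqrt ε * (d * EX)) ^ 2 = 4 * ε * (d * EX) ^ 2 := by
        rw [mul_pow, mul_pow, Real.sq_sqrt hε0]; ring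
      rw [this]
      nlinarith [hT2, mul_nonneg (mul_nonneg hε0 (mul_nonneg hd hEXnn)) (mul_nonneg hd hEXnn)]
    have h := Real.sqrt_le_sqrt hsq
    rwa [Real.sqrt_sq_eq_abs, Real.sqrt_sq (by positivity)] at h
  -- main identity
  have hid2 : (∑ ω, μ ω * (W ω * X ω * Y ω ^ 2)) - d ^ 2 * EWX = V + 2 * d * T := by
    rw [hVdef, hTdef, hEWXdef, Finset.mul_sum, Finset.mul_sum, ← Finset.sum_sub_distrib,
      ← Finset.sum_add_distrib]
    exact Finset.sum_congr rfl fun ω _ => by ring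
  rw [hid2]
  have hRHS : (2 * ε + 7 * Real.sqrt ε * EX / EWX) * (d ^ 2 * EWX)
      = 2 * ε * d ^ 2 * EWX + 7 * Real.sqrt ε * EX * d ^ 2 := by
    field_simp
  rw [hRHS]
  have habs : |V + 2 * d * T| ≤ V + 2 * d * |T| := by
    calc |V + 2 * d * T| ≤ |V| + |2 * d * T| := abs_add_le _ _
      _ = V + 2 * d * |T| := by
          rw [abs_of_nonneg hVnn, abs_mul, abs_of_nonneg (by linarith : (0:ℝ) ≤ 2 * d)]
  have h2dT : 2 * d * |T| ≤ 4 * Real.sqrt ε * d ^ 2 * EX := by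
    nlinarith [mul_le_mul_of_nonneg_left hTb (by linarith : (0:ℝ) ≤ 2 * d)]
  have hVb : V ≤ 3 * Real.sqrt ε * d ^ 2 * EX := by
    nlinarith [mul_nonneg (mul_nonneg hd hd) hEXnn]
  nlinarith [mul_nonneg (mul_nonneg hε0 (mul_nonneg hd hd)) hWX.le]
end

section
/- Let X and Y be discrete random variables where X takes nonnegative real values and Y is real-valued. Suppose for some 0 ≤ ε ≤ 1 and d ≥ 0 we have E[XY] = (1 ± ε)·d·E[X] and E[XY²] ≤ (1+ε)·d²·E[X]. Let W be the indicator of the event that |Y − d| ≤ 2ε^{1/4}·d. Then E[WX] ≥ (1 − 4ε^{1/4})·E[X]. -/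
open Finset

/-- Corollary `ECSconc`: on a finite probability space with probability
mass function `μ`, if `X ≥ 0`, `E[XY] = (1 ± ε)·d·E[X]` and `E[XY²] ≤ (1+ε)·d²·E[X]`,
then letting `W` be the indicator of `|Y − d| ≤ 2ε^{1/4}·d` we have
`E[WX] ≥ (1 − 4ε^{1/4})·E[X]`. -/
theorem ecs_concentration {Ω : Type*} [Fintype Ω] (μ X Y : Ω → ℝ)
    (hμ0 : ∀ ω, 0 ≤ μ ω) (hμ1 : (∑ ω, μ ω) = 1)
    (hX : ∀ ω, 0 ≤ X ω)
    {ε d : ℝ} (hε0 : 0 ≤ ε) (hε1 : ε ≤ 1) (hd : 0 ≤ d)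
    (hXY : |(∑ ω, μ ω * (X ω * Y ω)) - d * (∑ ω, μ ω * X ω)|
      ≤ ε * (d * (∑ ω, μ ω * X ω)))
    (hXY2 : (∑ ω, μ ω * (X ω * Y ω ^ 2)) ≤ (1 + ε) * d ^ 2 * (∑ ω, μ ω * X ω)) :
    (1 - 4 * ε ^ ((1 : ℝ) / 4)) * (∑ ω, μ ω * X ω)
      ≤ ∑ ω, μ ω * ((if |Y ω - d| ≤ 2 * ε ^ ((1 : ℝ) / 4) * d then (1 : ℝ) else 0) * X ω) := by
  set q : ℝ := ε ^ ((1 : ℝ) / 4) with hq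
  have hq0 : 0 ≤ q := Real.rpow_nonneg hε0 _
  have hq1 : q ≤ 1 := Real.rpow_le_one hε0 hε1 (by norm_num)
  have hq4 : q ^ 4 = ε := by
    rw [hq, ← Real.rpow_natCast (ε ^ ((1:ℝ)/4)) 4, ← Real.rpow_mul hε0]
    norm_num
  set S : ℝ := ∑ ω, μ ω * X ω with hS
  have hS0 : 0 ≤ S := Finset.sum_nonneg fun ω _ => mul_nonneg (hμ0 ω) (hX ω)
  set T : ℝ := ∑ ω, μ ω * ((if |Y ω - d| ≤ 2 * q * d then (1 : ℝ) else 0) * X ω) with hT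
  -- second moment bound
  have hlow : (1 - ε) * (d * S) ≤ ∑ ω, μ ω * (X ω * Y ω) := by
    have := (abs_le.mp hXY).1
    linarith
  have expand : (∑ ω, μ ω * (X ω * (Y ω - d) ^ 2))
      = (∑ ω, μ ω * (X ω * Y ω ^ 2)) - 2 * d * (∑ ω, μ ω * (X ω * Y ω)) + d ^ 2 * S := by
    rw [hS, Finset.mul_sum, Finset.mul_sum, ← Finset.sum_sub_distrib,
      ← Finset.sum_add_distrib]
    exact Finset.sum_congr rfl fun ω _ => by ring
  have hvar : (∑ ω, μ ω * (X ω * (Y ω - d) ^ 2)) ≤ 3 * ε * d ^ 2 * S := by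
    rw [expand]
    nlinarith [mul_nonneg hd hS0, mul_le_mul_of_nonneg_left hlow (by positivity : (0:ℝ) ≤ 2 * d)]
  -- Chebyshev pointwise bound
  have cheb : (4 * q ^ 2 * d ^ 2) * (S - T) ≤ ∑ ω, μ ω * (X ω * (Y ω - d) ^ 2) := by
    have hsub : S - T = ∑ ω, (μ ω * X ω
        - μ ω * ((if |Y ω - d| ≤ 2 * q * d then (1 : ℝ) else 0) * X ω)) := by
      rw [Finset.sum_sub_distrib]
    rw [hsub, Finset.mul_sum]
    apply Finset.sum_le_sum
    intro ω _
    by_cases h : |Y ω - d| ≤ 2 * q * d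
    · rw [if_pos h]
      have : μ ω * X ω - μ ω * (1 * X ω) = 0 := by ring
      rw [this, mul_zero]
      exact mul_nonneg (hμ0 ω) (mul_nonneg (hX ω) (sq_nonneg _))
    · rw [if_neg h]
      push_neg at h
      have h2 : (2 * q * d) ^ 2 ≤ (Y ω - d) ^ 2 := by
        rw [← sq_abs (Y ω - d)]
        exact pow_le_pow_left₀ (by positivity) h.le 2
      have hmx : 0 ≤ μ ω * X ω := mul_nonneg (hμ0 ω) (hX ω)
      nlinarith
  by_cases hqd : 0 < q * d
  · -- main case
    have hdp : 0 < d := hd.lt_of_ne fun h => by simp [← h] at hqd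
    have hqp : 0 < q := hq0.lt_of_ne fun h => by simp [← h] at hqd
    have keq : 3 * ε * d ^ 2 * S = 4 * q ^ 2 * d ^ 2 * (3 / 4 * q ^ 2 * S) := by
      rw [← hq4]; ring
    have key : 4 * q ^ 2 * d ^ 2 * (S - T) ≤ 4 * q ^ 2 * d ^ 2 * (3 / 4 * q ^ 2 * S) :=
      (cheb.trans hvar).trans_eq keq
    have h2 : (0:ℝ) < 4 * q ^ 2 * d ^ 2 := by positivity
    have h1 : S - T ≤ 3 / 4 * q ^ 2 * S := le_of_mul_le_mul_left key h2
    nlinarith [mul_nonneg (mul_nonneg hq0 (sub_nonneg.mpr hq1)) hS0,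
      mul_nonneg hq0 hS0]
  · -- degenerate case: q * d = 0
    have hqd0 : q * d = 0 := le_antisymm (not_lt.mp hqd) (by positivity)
    have hε3 : 3 * ε * d ^ 2 * S = 0 := by
      rcases mul_eq_zero.mp hqd0 with h | h
      · have : ε = 0 := by
          have := hq4; rw [h] at this; simpa using this.symm
        rw [this]; ring
      · rw [h]; ring
    have hzero : ∀ ω ∈ Finset.univ, μ ω * (X ω * (Y ω - d) ^ 2) = 0 := by
      rw [← Finset.sum_eq_zero_iff_of_nonneg
        (fun ω _ => mul_nonneg (hμ0 ω) (mul_nonneg (hX ω) (sq_nonneg _)))]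
      exact le_antisymm (hε3 ▸ hvar)
        (Finset.sum_nonneg fun ω _ => mul_nonneg (hμ0 ω) (mul_nonneg (hX ω) (sq_nonneg _)))
    have hTS : T = S := by
      rw [hT, hS]
      apply Finset.sum_congr rfl
      intro ω _
      by_cases h : |Y ω - d| ≤ 2 * q * d
      · rw [if_pos h]; ring
      · rw [if_neg h]
        push_neg at h
        have hy : (Y ω - d) ^ 2 ≠ 0 := by
          have h0 : (0:ℝ) ≤ 2 * q * d := mul_nonneg (mul_nonneg (by norm_num) hq0) hd
          have hlt : 0 < |Y ω - d| := lt_of_le_of_lt h0 h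
          have : Y ω - d ≠ 0 := fun hc => by simp [hc] at hlt
          exact pow_ne_zero 2 this
        have := hzero ω (Finset.mem_univ ω)
        have hmx : μ ω * X ω = 0 := by
          rcases mul_eq_zero.mp this with h1 | h1
          · rw [h1]; ring
          · rcases mul_eq_zero.mp h1 with h2 | h2
            · rw [h2]; ring
            · exact absurd h2 hy
        rw [hmx]; ring
    rw [hTS]
    nlinarith [mul_nonneg hq0 hS0]
end

section
/- Let X and Y be discrete random variables where X takes nonnegative real values and Y is real-valued. Suppose for a natural number t ≥ 2 and reals 0 ≤ ε < 2^{2−2t} and d ≥ 0 we have E[XY] = (1 ± ε)·d·E[X] and E[X·Y^{2^t}] ≤ (1+ε)·d^{2^t}·E[X]. Let W be the indicator of the event that |Y − d| ≤ 2ε^{1/8}·d. Then E[WX] ≥ (1 − 4ε^{1/8})·E[X]. -/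
open Finset

private lemma cs_aux {Ω : Type*} [Fintype Ω] (w h : Ω → ℝ) (hw : ∀ ω, 0 ≤ w ω) :
    (∑ ω, w ω * h ω) ^ 2 ≤ (∑ ω, w ω) * (∑ ω, w ω * h ω ^ 2) := by
  have key := Finset.sum_mul_sq_le_sq_mul_sq Finset.univ (fun ω => Real.sqrt (w ω))
    (fun ω => Real.sqrt (w ω) * h ω)
  calc (∑ ω, w ω * h ω) ^ 2
      = (∑ ω, Real.sqrt (w ω) * (Real.sqrt (w ω) * h ω)) ^ 2 := by
        congr 1
        refine Finset.sum_congr rfl fun ω _ => ?_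
        rw [← mul_assoc, Real.mul_self_sqrt (hw ω)]
    _ ≤ (∑ ω, Real.sqrt (w ω) ^ 2) * (∑ ω, (Real.sqrt (w ω) * h ω) ^ 2) := key
    _ = (∑ ω, w ω) * (∑ ω, w ω * h ω ^ 2) := by
        congr 1
        · exact Finset.sum_congr rfl fun ω _ => Real.sq_sqrt (hw ω)
        · refine Finset.sum_congr rfl fun ω _ => ?_
          rw [mul_pow, Real.sq_sqrt (hw ω)]

set_option maxHeartbeats 4000000 in
/-- Corollary `higherECSconc`: on a finite probability space with
probability mass function `μ`, if `X ≥ 0`, `t ≥ 2`, `0 ≤ ε < 2^{2−2t}`,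
`E[XY] = (1 ± ε)·d·E[X]` and `E[X·Y^{2^t}] ≤ (1+ε)·d^{2^t}·E[X]`, then letting `W` be
the indicator of `|Y − d| ≤ 2ε^{1/8}·d` we have `E[WX] ≥ (1 − 4ε^{1/8})·E[X]`. -/
theorem higher_ecs_concentration {Ω : Type*} [Fintype Ω] (μ X Y : Ω → ℝ)
    (hμ0 : ∀ ω, 0 ≤ μ ω) (hμ1 : (∑ ω, μ ω) = 1)
    (hX : ∀ ω, 0 ≤ X ω)
    (t : ℕ) (ht : 2 ≤ t)
    {ε d : ℝ} (hε0 : 0 ≤ ε) (hε1 : ε < (2 : ℝ) ^ ((2 : ℝ) - 2 * (t : ℝ))) (hd : 0 ≤ d)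
    (hXY : |(∑ ω, μ ω * (X ω * Y ω)) - d * (∑ ω, μ ω * X ω)|
      ≤ ε * (d * (∑ ω, μ ω * X ω)))
    (hXYt : (∑ ω, μ ω * (X ω * Y ω ^ (2 ^ t))) ≤ (1 + ε) * d ^ (2 ^ t) * (∑ ω, μ ω * X ω)) :
    (1 - 4 * ε ^ ((1 : ℝ) / 8)) * (∑ ω, μ ω * X ω)
      ≤ ∑ ω, μ ω * ((if |Y ω - d| ≤ 2 * ε ^ ((1 : ℝ) / 8) * d then (1 : ℝ) else 0) * X ω) := by
  set S := ∑ ω, μ ω * X ω with hSdef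
  set u := ε ^ ((1 : ℝ) / 8) with hudef
  have hterm : ∀ ω, 0 ≤ μ ω * X ω := fun ω => mul_nonneg (hμ0 ω) (hX ω)
  have hS0 : 0 ≤ S := Finset.sum_nonneg fun ω _ => hterm ω
  have hu0 : 0 ≤ u := Real.rpow_nonneg hε0 _
  have hεu : ε = u ^ (8 : ℕ) := by
    rw [hudef, ← Real.rpow_natCast (ε ^ ((1 : ℝ) / 8)) 8, ← Real.rpow_mul hε0]
    norm_num
  clear_value S u
  have hRnn : 0 ≤ ∑ ω, μ ω * ((if |Y ω - d| ≤ 2 * u * d then (1 : ℝ) else 0) * X ω) := by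
    refine Finset.sum_nonneg fun ω _ => ?_
    have h1 : (0:ℝ) ≤ (if |Y ω - d| ≤ 2 * u * d then (1:ℝ) else 0) := by
      split <;> norm_num
    exact mul_nonneg (hμ0 ω) (mul_nonneg h1 (hX ω))
  rcases le_or_gt 1 (4 * u) with htriv | hu14
  · have h0 : (1 - 4 * u) * S ≤ 0 := mul_nonpos_of_nonpos_of_nonneg (by linarith only [htriv]) hS0
    linarith only [h0, hRnn]
  have hu1 : u ≤ 1 := by linarith only [hu14, hu0]
  -- case d = 0
  rcases eq_or_lt_of_le hd with hd0 | hdpos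
  · have h1 : (∑ ω, μ ω * (X ω * Y ω ^ (2 ^ t))) ≤ 0 := by
      have : d ^ (2 ^ t) = 0 := by
        rw [← hd0]; exact zero_pow (by positivity)
      rw [this] at hXYt; simpa using hXYt
    have heven : Even (2 ^ t) := (Nat.even_pow).mpr ⟨even_iff_two_dvd.mpr ⟨1, rfl⟩, by omega⟩
    have h2 : ∀ ω ∈ Finset.univ, (0:ℝ) ≤ μ ω * (X ω * Y ω ^ (2 ^ t)) := fun ω _ =>
      mul_nonneg (hμ0 ω) (mul_nonneg (hX ω) (heven.pow_nonneg _))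
    have h3 : (∑ ω, μ ω * (X ω * Y ω ^ (2 ^ t))) = 0 :=
      le_antisymm h1 (Finset.sum_nonneg h2)
    have h4 := (Finset.sum_eq_zero_iff_of_nonneg h2).mp h3
    have h5 : (∑ ω, μ ω * ((if |Y ω - d| ≤ 2 * u * d then (1 : ℝ) else 0) * X ω)) = S := by
      rw [hSdef]
      refine Finset.sum_congr rfl fun ω _ => ?_
      rcases eq_or_ne (μ ω * X ω) 0 with hz | hz
      · have : μ ω * ((if |Y ω - d| ≤ 2 * u * d then (1 : ℝ) else 0) * X ω)
            = (if |Y ω - d| ≤ 2 * u * d then (1 : ℝ) else 0) * (μ ω * X ω) := by ring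
        rw [this, hz, mul_zero]
      · have h6 := h4 ω (Finset.mem_univ ω)
        have h7 : (μ ω * X ω) * Y ω ^ (2 ^ t) = 0 := by
          rw [← h6]; ring
        have h8 : Y ω = 0 := by
          rcases mul_eq_zero.mp h7 with h | h
          · exact absurd h hz
          · exact pow_eq_zero_iff (by positivity) |>.mp h
        have hcond : |Y ω - d| ≤ 2 * u * d := by
          rw [h8, ← hd0]
          simp
        rw [if_pos hcond, one_mul]
    rw [h5]
    have h6 : 0 ≤ u * S := mul_nonneg hu0 hS0
    linarith only [h6]
  -- case S = 0
  rcases eq_or_lt_of_le hS0 with hSz | hSpos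
  · rw [← hSz, mul_zero]; exact hRnn
  -- main case
  have hε8 : ε = u ^ (8:ℕ) := hεu
  have hεle1 : ε ≤ 1 := by rw [hεu]; exact pow_le_one₀ hu0 hu1
  obtain ⟨A, hAdef⟩ : ∃ A : ℕ → ℝ, ∀ k, A k = ∑ ω, μ ω * (X ω * Y ω ^ (2 ^ k)) :=
    ⟨fun k => ∑ ω, μ ω * (X ω * Y ω ^ (2 ^ k)), fun k => rfl⟩
  have hCS : ∀ k, (A k) ^ 2 ≤ S * A (k + 1) := by
    intro k
    have h := cs_aux (fun ω => μ ω * X ω) (fun ω => Y ω ^ (2 ^ k)) hterm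
    have e1 : (∑ ω, (fun ω => μ ω * X ω) ω * (fun ω => Y ω ^ (2 ^ k)) ω) = A k := by
      rw [hAdef k]; exact Finset.sum_congr rfl fun ω _ => by ring
    have e2 : (∑ ω, (fun ω => μ ω * X ω) ω * ((fun ω => Y ω ^ (2 ^ k)) ω) ^ 2) = A (k + 1) := by
      rw [hAdef (k + 1)]
      refine Finset.sum_congr rfl fun ω _ => ?_
      show (μ ω * X ω) * (Y ω ^ (2 ^ k)) ^ 2 = μ ω * (X ω * Y ω ^ (2 ^ (k + 1)))
      rw [← pow_mul, ← pow_succ]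
      ring
    have e0 : (∑ ω, (fun ω => μ ω * X ω) ω) = S := by
      rw [hSdef]
    rw [e1, e2, e0] at h
    exact h
  have hA0 : A 0 = ∑ ω, μ ω * (X ω * Y ω) := by
    rw [hAdef 0]; exact Finset.sum_congr rfl fun ω _ => by norm_num
  have habs2 := abs_le.mp hXY
  have hA0low : (1 - ε) * d * S ≤ A 0 := by rw [hA0]; linarith only [habs2.1]
  have hA0up : A 0 ≤ (1 + ε) * d * S := by rw [hA0]; linarith only [habs2.2]
  have hAnn : ∀ k, 0 ≤ A k := by
    intro k
    rcases Nat.eq_zero_or_pos k with rfl | hk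
    · refine le_trans ?_ hA0low
      have : 0 ≤ (1 - ε) * d := mul_nonneg (by linarith) hd
      exact mul_nonneg this hS0
    · rw [hAdef k]
      refine Finset.sum_nonneg fun ω _ => ?_
      have heven : Even (2 ^ k) := (Nat.even_pow).mpr ⟨even_two, by omega⟩
      exact mul_nonneg (hμ0 ω) (mul_nonneg (hX ω) (heven.pow_nonneg _))
  -- lower chain
  have hlow : ∀ k, (1 - ε) ^ (2 ^ k) * d ^ (2 ^ k) * S ≤ A k := by
    intro k
    induction k with
    | zero => simpa using hA0low
    | succ k ih =>
      have h1 : 0 ≤ (1 - ε) ^ (2 ^ k) * d ^ (2 ^ k) * S :=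
        mul_nonneg (mul_nonneg (pow_nonneg (by linarith) _) (pow_nonneg hd _)) hS0
      have h2 : ((1 - ε) ^ (2 ^ k) * d ^ (2 ^ k) * S) ^ 2 ≤ (A k) ^ 2 :=
        pow_le_pow_left₀ h1 ih 2
      have e : ((1 - ε) ^ (2 ^ k) * d ^ (2 ^ k) * S) ^ 2
          = S * ((1 - ε) ^ (2 ^ (k + 1)) * d ^ (2 ^ (k + 1)) * S) := by
        rw [pow_succ 2 k, pow_mul, pow_mul]
        ring
      have h3 : S * ((1 - ε) ^ (2 ^ (k + 1)) * d ^ (2 ^ (k + 1)) * S) ≤ S * A (k + 1) := by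
        rw [← e]; exact h2.trans (hCS k)
      exact le_of_mul_le_mul_left h3 hSpos
  -- upper chain
  have hup : ∀ j, j ≤ t - 1 → A (t - j) ≤ (1 + ε) * d ^ (2 ^ (t - j)) * S := by
    intro j
    induction j with
    | zero =>
      intro _
      simp only [Nat.sub_zero]
      rw [hAdef t]
      exact hXYt
    | succ j ih =>
      intro hj
      have ihj := ih (by omega)
      have hk : t - (j + 1) + 1 = t - j := by omega
      have h3 := hCS (t - (j + 1))
      rw [hk] at h3
      have hnn : (0:ℝ) ≤ (1 + ε) * d ^ (2 ^ (t - (j + 1))) * S :=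
        mul_nonneg (mul_nonneg (by linarith) (pow_nonneg hd _)) hS0
      have h4 : (A (t - (j + 1))) ^ 2 ≤ ((1 + ε) * d ^ (2 ^ (t - (j + 1))) * S) ^ 2 := by
        have e : ((1 + ε) * d ^ (2 ^ (t - (j + 1))) * S) ^ 2
            = (1 + ε) ^ 2 * d ^ (2 ^ (t - j)) * S ^ 2 := by
          rw [← hk, pow_succ 2 (t - (j + 1)), pow_mul]
          ring
        have h5 : S * A (t - j) ≤ (1 + ε) * d ^ (2 ^ (t - j)) * S ^ 2 := by
          have h5' := mul_le_mul_of_nonneg_left ihj hS0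
          calc S * A (t - j) ≤ S * ((1 + ε) * d ^ (2 ^ (t - j)) * S) := h5'
            _ = (1 + ε) * d ^ (2 ^ (t - j)) * S ^ 2 := by ring
        have h6 : (1 + ε) * d ^ (2 ^ (t - j)) * S ^ 2
            ≤ (1 + ε) ^ 2 * d ^ (2 ^ (t - j)) * S ^ 2 := by
          have hb : (1 + ε) ≤ (1 + ε) ^ 2 := by nlinarith [hε0, sq_nonneg ε]
          have := mul_le_mul_of_nonneg_right hb
            (mul_nonneg (pow_nonneg hd (2 ^ (t - j))) (sq_nonneg S))
          calc (1 + ε) * d ^ (2 ^ (t - j)) * S ^ 2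
              = (1 + ε) * (d ^ (2 ^ (t - j)) * S ^ 2) := by ring
            _ ≤ (1 + ε) ^ 2 * (d ^ (2 ^ (t - j)) * S ^ 2) := this
            _ = (1 + ε) ^ 2 * d ^ (2 ^ (t - j)) * S ^ 2 := by ring
        rw [e]
        linarith only [h3, h5, h6]
      exact le_of_pow_le_pow_left₀ two_ne_zero hnn h4
  have hA1up : A 1 ≤ (1 + ε) * d ^ 2 * S := by
    have h := hup (t - 1) (le_refl _)
    have e : t - (t - 1) = 1 := by omega
    rw [e] at h
    simpa using h
  have hAmup : A (t - 1) ≤ (1 + ε) * d ^ (2 ^ (t - 1)) * S := hup 1 (by omega)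
  -- numeric bound: 2^(t-1) * ε ≤ u^4
  have htm : t - 1 + 1 = t := by omega
  have hpow2 : u ^ 4 * (2:ℝ) ^ (t - 1) < 1 := by
    have hrw : (2:ℝ) ^ ((2:ℝ) - 2 * (t:ℝ)) * (2:ℝ) ^ (2 * (t - 1)) = 1 := by
      rw [show ((2:ℝ) ^ (2 * (t - 1)) : ℝ) = (2:ℝ) ^ (((2 * (t - 1) : ℕ)):ℝ) from
        (Real.rpow_natCast 2 _).symm]
      rw [← Real.rpow_add (by norm_num : (0:ℝ) < 2)]
      rw [show (2:ℝ) - 2 * (t:ℝ) + ((2 * (t - 1) : ℕ):ℝ) = 0 from by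
        push_cast [Nat.cast_sub (by omega : 1 ≤ t)]; ring]
      exact Real.rpow_zero 2
    have hsq : (u ^ 4 * (2:ℝ) ^ (t - 1)) ^ 2 < 1 := by
      have e : (u ^ 4 * (2:ℝ) ^ (t - 1)) ^ 2 = u ^ 8 * (2:ℝ) ^ (2 * (t - 1)) := by
        rw [mul_pow, ← pow_mul, ← pow_mul]
        ring_nf
      rw [e, ← hrw]
      have hp : (0:ℝ) < (2:ℝ) ^ (2 * (t - 1)) := by positivity
      have : u ^ 8 < (2:ℝ) ^ ((2:ℝ) - 2 * (t:ℝ)) := by rw [← hεu]; exact hε1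
      exact mul_lt_mul_of_pos_right this hp
    have hnn : (0:ℝ) ≤ u ^ 4 * (2:ℝ) ^ (t - 1) := by positivity
    exact lt_of_pow_lt_pow_left₀ 2 zero_le_one (by rw [one_pow]; exact hsq)
  have hkey : ((2:ℝ) ^ (t - 1)) * ε ≤ u ^ 4 := by
    rw [hεu]
    have h1 : (0:ℝ) ≤ u ^ 4 := by positivity
    have h2 : u ^ 4 * (2:ℝ) ^ (t - 1) * u ^ 4 ≤ 1 * u ^ 4 :=
      mul_le_mul_of_nonneg_right hpow2.le h1
    calc ((2:ℝ) ^ (t - 1)) * u ^ 8 = u ^ 4 * (2:ℝ) ^ (t - 1) * u ^ 4 := by ring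
      _ ≤ 1 * u ^ 4 := h2
      _ = u ^ 4 := one_mul _
  -- Bernoulli
  have hBern : 1 - u ^ 4 ≤ (1 - ε) ^ (2 ^ (t - 1)) := by
    have h1 := one_add_mul_le_pow (a := -ε) (by linarith) (2 ^ (t - 1))
    have h2 : ((2 ^ (t - 1) : ℕ) : ℝ) = (2:ℝ) ^ (t - 1) := by push_cast; ring
    rw [h2] at h1
    have : (1:ℝ) + -ε = 1 - ε := by ring
    rw [this] at h1
    linarith only [h1, hkey]
  set D := d ^ (2 ^ (t - 1)) with hDdef
  have hD : 0 < D := pow_pos hdpos _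
  have hAmlow : (1 - u ^ 4) * D * S ≤ A (t - 1) := by
    have h1 := hlow (t - 1)
    have h2 : (1 - u ^ 4) * D * S ≤ (1 - ε) ^ (2 ^ (t - 1)) * D * S := by
      have h2' := mul_le_mul_of_nonneg_right hBern (mul_nonneg hD.le hS0)
      calc (1 - u ^ 4) * D * S = (1 - u ^ 4) * (D * S) := by ring
        _ ≤ (1 - ε) ^ (2 ^ (t - 1)) * (D * S) := h2'
        _ = (1 - ε) ^ (2 ^ (t - 1)) * D * S := by ring
    exact h2.trans h1
  -- variance
  have hZsq : ∀ ω, (Y ω ^ (2 ^ (t - 1))) ^ 2 = Y ω ^ (2 ^ t) := by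
    intro ω
    rw [← pow_mul, ← pow_succ, htm]
  have hD2 : D ^ 2 = d ^ (2 ^ t) := by
    rw [hDdef, ← pow_mul, ← pow_succ, htm]
  set V := ∑ ω, (μ ω * X ω) * (Y ω ^ (2 ^ (t - 1)) - D) ^ 2 with hVdef
  have hVexp : V = A t - 2 * D * (A (t - 1)) + D ^ 2 * S := by
    have hc : ∀ ω ∈ Finset.univ, (μ ω * X ω) * (Y ω ^ (2 ^ (t - 1)) - D) ^ 2
        = μ ω * (X ω * Y ω ^ (2 ^ t)) - 2 * D * (μ ω * (X ω * Y ω ^ (2 ^ (t - 1))))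
          + D ^ 2 * (μ ω * X ω) := by
      intro ω _
      rw [← hZsq ω]
      ring
    rw [hVdef, Finset.sum_congr rfl hc, Finset.sum_add_distrib, Finset.sum_sub_distrib,
      ← Finset.mul_sum, ← Finset.mul_sum, hAdef t, hAdef (t - 1), hSdef]
  have hAtup : A t ≤ (1 + ε) * D ^ 2 * S := by
    rw [hD2, hAdef t]; exact hXYt
  have hεu4 : ε ≤ u ^ 4 := by
    rw [hεu]
    have h4 : u ^ 4 ≤ 1 := pow_le_one₀ hu0 hu1
    have h5 : u ^ 4 * u ^ 4 ≤ 1 * u ^ 4 := mul_le_mul_of_nonneg_right h4 (pow_nonneg hu0 4)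
    calc u ^ 8 = u ^ 4 * u ^ 4 := by ring
      _ ≤ 1 * u ^ 4 := h5
      _ = u ^ 4 := one_mul _
  have hVnn : 0 ≤ V := Finset.sum_nonneg fun ω _ => mul_nonneg (hterm ω) (sq_nonneg _)
  have hVub : V ≤ 3 * u ^ 4 * D ^ 2 * S := by
    rw [hVexp]
    have h1 := mul_le_mul_of_nonneg_left hAmlow (by linarith only [hD] : (0:ℝ) ≤ 2 * D)
    have h2 : ε * (D ^ 2 * S) ≤ u ^ 4 * (D ^ 2 * S) :=
      mul_le_mul_of_nonneg_right hεu4 (mul_nonneg (sq_nonneg D) hS0)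
    linarith only [hAtup, h1, h2]
  -- Chebyshev
  have hcheb : ∑ ω, (if 2 * u * D < |Y ω ^ (2 ^ (t - 1)) - D| then (1:ℝ) else 0) * (μ ω * X ω)
      ≤ (3 / 4) * u ^ 2 * S := by
    have key : (2 * u * D) ^ 2 *
        (∑ ω, (if 2 * u * D < |Y ω ^ (2 ^ (t - 1)) - D| then (1:ℝ) else 0) * (μ ω * X ω)) ≤ V := by
      rw [Finset.mul_sum, hVdef]
      refine Finset.sum_le_sum fun ω _ => ?_
      by_cases hc : 2 * u * D < |Y ω ^ (2 ^ (t - 1)) - D|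
      · rw [if_pos hc]
        have h1 : (2 * u * D) ^ 2 ≤ (Y ω ^ (2 ^ (t - 1)) - D) ^ 2 := by
          rw [← sq_abs (Y ω ^ (2 ^ (t - 1)) - D)]
          exact pow_le_pow_left₀ (by positivity) hc.le 2
        have h2 := mul_le_mul_of_nonneg_left h1 (hterm ω)
        linarith only [h2]
      · rw [if_neg hc]
        have h2 := mul_nonneg (hterm ω) (sq_nonneg (Y ω ^ (2 ^ (t - 1)) - D))
        linarith only [h2]
    rcases eq_or_lt_of_le hu0 with hu0' | hupos
    · -- u = 0
      have hVz : V = 0 := by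
        have : V ≤ 0 := by rw [← hu0'] at hVub; simpa using hVub
        linarith
      have htz := (Finset.sum_eq_zero_iff_of_nonneg
        (fun ω _ => mul_nonneg (hterm ω) (sq_nonneg (Y ω ^ (2 ^ (t - 1)) - D)))).mp hVz
      have hz : ∀ ω ∈ Finset.univ,
          (if 2 * u * D < |Y ω ^ (2 ^ (t - 1)) - D| then (1:ℝ) else 0) * (μ ω * X ω) = 0 := by
        intro ω _
        by_cases hc : 2 * u * D < |Y ω ^ (2 ^ (t - 1)) - D|
        · rw [if_pos hc, one_mul]
          have h0 : 0 < |Y ω ^ (2 ^ (t - 1)) - D| := by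
            refine lt_of_le_of_lt ?_ hc
            rw [← hu0']; simp
          have hsq' : 0 < (Y ω ^ (2 ^ (t - 1)) - D) ^ 2 := by
            rw [← sq_abs]; positivity
          have := htz ω (Finset.mem_univ ω)
          rcases mul_eq_zero.mp this with h | h
          · exact h
          · exact absurd h (ne_of_gt hsq')
        · rw [if_neg hc, zero_mul]
      rw [Finset.sum_congr rfl hz]
      simp
      positivity
    · -- u > 0
      have hc2 := key.trans hVub
      have h3 : (∑ ω, (if 2 * u * D < |Y ω ^ (2 ^ (t - 1)) - D| then (1:ℝ) else 0) * (μ ω * X ω))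
          * (4 * u ^ 2 * D ^ 2) ≤ ((3 / 4) * u ^ 2 * S) * (4 * u ^ 2 * D ^ 2) := by
        linarith only [hc2]
      exact le_of_mul_le_mul_right h3 (by positivity)
  -- negative-part bound
  have hYabs : ∑ ω, (μ ω * X ω) * |Y ω| ≤ (1 + ε) * d * S := by
    have h := cs_aux (fun ω => μ ω * X ω) (fun ω => |Y ω|) hterm
    have e2 : (∑ ω, (fun ω => μ ω * X ω) ω * ((fun ω => |Y ω|) ω) ^ 2) = A 1 := by
      rw [hAdef 1]
      refine Finset.sum_congr rfl fun ω _ => ?_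
      show (μ ω * X ω) * |Y ω| ^ 2 = μ ω * (X ω * Y ω ^ (2 ^ 1))
      rw [sq_abs]
      norm_num
      ring
    have e0 : (∑ ω, (fun ω => μ ω * X ω) ω) = S := by
      rw [hSdef]
    have e1 : (∑ ω, (fun ω => μ ω * X ω) ω * (fun ω => |Y ω|) ω) = ∑ ω, (μ ω * X ω) * |Y ω| :=
      rfl
    rw [e2, e0, e1] at h
    have hnn : (0:ℝ) ≤ (1 + ε) * d * S := mul_nonneg (mul_nonneg (by linarith) hd) hS0
    refine le_of_pow_le_pow_left₀ two_ne_zero hnn ?_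
    calc (∑ ω, (μ ω * X ω) * |Y ω|) ^ 2 ≤ S * A 1 := h
      _ ≤ S * ((1 + ε) * d ^ 2 * S) := mul_le_mul_of_nonneg_left hA1up hS0
      _ ≤ ((1 + ε) * d * S) ^ 2 := by
          have hb : (1 + ε) ≤ (1 + ε) ^ 2 := by nlinarith [hε0, sq_nonneg ε]
          have h9 := mul_le_mul_of_nonneg_right hb
            (mul_nonneg (sq_nonneg d) (sq_nonneg S))
          calc S * ((1 + ε) * d ^ 2 * S) = (1 + ε) * (d ^ 2 * S ^ 2) := by ring
            _ ≤ (1 + ε) ^ 2 * (d ^ 2 * S ^ 2) := h9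
            _ = ((1 + ε) * d * S) ^ 2 := by ring
  have hneg : ∑ ω, (if Y ω ≤ -(1 - 2 * u) * d then (1:ℝ) else 0) * (μ ω * X ω) ≤ 4 * ε * S := by
    have hNnn : 0 ≤ ∑ ω, (if Y ω ≤ -(1 - 2 * u) * d then (1:ℝ) else 0) * (μ ω * X ω) := by
      refine Finset.sum_nonneg fun ω _ => ?_
      have : (0:ℝ) ≤ (if Y ω ≤ -(1 - 2 * u) * d then (1:ℝ) else 0) := by split <;> norm_num
      exact mul_nonneg this (hterm ω)
    have hpt : ∀ ω ∈ Finset.univ, μ ω * (X ω * Y ω)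
        + (1 - 2 * u) * d * ((if Y ω ≤ -(1 - 2 * u) * d then (1:ℝ) else 0) * (μ ω * X ω))
        ≤ (μ ω * X ω) * |Y ω| := by
      intro ω _
      by_cases hc : Y ω ≤ -(1 - 2 * u) * d
      · rw [if_pos hc, one_mul]
        have h2 : Y ω + (1 - 2 * u) * d ≤ 0 := by linarith
        have h3 : (μ ω * X ω) * (Y ω + (1 - 2 * u) * d) ≤ 0 :=
          mul_nonpos_of_nonneg_of_nonpos (hterm ω) h2
        have h4 : 0 ≤ (μ ω * X ω) * |Y ω| := mul_nonneg (hterm ω) (abs_nonneg _)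
        nlinarith [h3, h4, hterm ω]
      · rw [if_neg hc, zero_mul, mul_zero, add_zero]
        have h5 := mul_le_mul_of_nonneg_left (le_abs_self (Y ω)) (hterm ω)
        nlinarith [h5]
    have hsum := Finset.sum_le_sum hpt
    rw [Finset.sum_add_distrib, ← Finset.mul_sum] at hsum
    have hA0l' : (1 - ε) * d * S ≤ ∑ ω, μ ω * (X ω * Y ω) := by
      rw [← hA0]; exact hA0low
    have h3 : (1 - 2 * u) * d *
        (∑ ω, (if Y ω ≤ -(1 - 2 * u) * d then (1:ℝ) else 0) * (μ ω * X ω)) ≤ 2 * ε * (d * S) := by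
      linarith only [hsum, hA0l', hYabs]
    have h5 : (1 - 2 * u) *
        (∑ ω, (if Y ω ≤ -(1 - 2 * u) * d then (1:ℝ) else 0) * (μ ω * X ω)) ≤ 2 * ε * S := by
      have hmul : d * ((1 - 2 * u) *
          (∑ ω, (if Y ω ≤ -(1 - 2 * u) * d then (1:ℝ) else 0) * (μ ω * X ω))) ≤ d * (2 * ε * S) := by
        linarith only [h3]
      exact le_of_mul_le_mul_left hmul hdpos
    have h6 : u * (∑ ω, (if Y ω ≤ -(1 - 2 * u) * d then (1:ℝ) else 0) * (μ ω * X ω))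
        ≤ (1 / 4) * (∑ ω, (if Y ω ≤ -(1 - 2 * u) * d then (1:ℝ) else 0) * (μ ω * X ω)) :=
      mul_le_mul_of_nonneg_right (by linarith only [hu14]) hNnn
    linarith only [h5, h6, hNnn]
  -- dichotomy
  have heven1 : Even (2 ^ (t - 1)) := (Nat.even_pow).mpr ⟨even_two, by omega⟩
  have hne1 : (2 : ℕ) ^ (t - 1) ≠ 0 := by positivity
  have hdich : ∀ ω, (1 - (if |Y ω - d| ≤ 2 * u * d then (1:ℝ) else 0)) * (μ ω * X ω)
      ≤ (if 2 * u * D < |Y ω ^ (2 ^ (t - 1)) - D| then (1:ℝ) else 0) * (μ ω * X ω)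
        + (if Y ω ≤ -(1 - 2 * u) * d then (1:ℝ) else 0) * (μ ω * X ω) := by
    intro ω
    have hi1 : (0:ℝ) ≤ (if 2 * u * D < |Y ω ^ (2 ^ (t - 1)) - D| then (1:ℝ) else 0) := by
      split <;> norm_num
    have hi2 : (0:ℝ) ≤ (if Y ω ≤ -(1 - 2 * u) * d then (1:ℝ) else 0) := by
      split <;> norm_num
    by_cases hW : |Y ω - d| ≤ 2 * u * d
    · rw [if_pos hW]
      have : (1 - (1:ℝ)) * (μ ω * X ω) = 0 := by ring
      rw [this]
      exact add_nonneg (mul_nonneg hi1 (hterm ω)) (mul_nonneg hi2 (hterm ω))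
    · rw [if_neg hW]
      by_cases h1 : 2 * u * D < |Y ω ^ (2 ^ (t - 1)) - D|
      · rw [if_pos h1]
        have h2 := mul_nonneg hi2 (hterm ω)
        linarith only [h2]
      · rw [if_neg h1]
        have hc : Y ω ≤ -(1 - 2 * u) * d := by
          by_contra hc'
          push_neg at hc' h1
          apply hW
          have habs1 := abs_le.mp h1
          have habsZ : |Y ω| ^ (2 ^ (t - 1)) = Y ω ^ (2 ^ (t - 1)) := by
            rw [← abs_pow, abs_of_nonneg (heven1.pow_nonneg _)]
          have hup' : |Y ω| ≤ (1 + 2 * u) * d := by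
            refine le_of_pow_le_pow_left₀ hne1 (by positivity) ?_
            rw [habsZ]
            calc Y ω ^ (2 ^ (t - 1)) ≤ (1 + 2 * u) * D := by linarith [habs1.2]
              _ ≤ ((1 + 2 * u) * d) ^ (2 ^ (t - 1)) := by
                  rw [mul_pow, hDdef]
                  have h6 : (1 + 2 * u) ≤ (1 + 2 * u) ^ (2 ^ (t - 1)) :=
                    le_self_pow₀ (by linarith) hne1
                  exact mul_le_mul_of_nonneg_right h6 (pow_nonneg hd _)
          have hlo' : (1 - 2 * u) * d ≤ |Y ω| := by
            refine le_of_pow_le_pow_left₀ hne1 (abs_nonneg _) ?_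
            rw [habsZ]
            calc ((1 - 2 * u) * d) ^ (2 ^ (t - 1))
                = (1 - 2 * u) ^ (2 ^ (t - 1)) * D := by rw [mul_pow, hDdef]
              _ ≤ (1 - 2 * u) * D := by
                  have h7 : (1 - 2 * u) ^ (2 ^ (t - 1)) ≤ (1 - 2 * u) :=
                    pow_le_of_le_one (by linarith) (by linarith) hne1
                  exact mul_le_mul_of_nonneg_right h7 hD.le
              _ ≤ Y ω ^ (2 ^ (t - 1)) := by linarith [habs1.1]
          rcases le_or_gt 0 (Y ω) with hy | hy
          · rw [abs_of_nonneg hy] at hup' hlo'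
            rw [abs_le]
            constructor <;> linarith only [hup', hlo']
          · exfalso
            rw [abs_of_neg hy] at hlo'
            linarith only [hlo', hc']
        rw [if_pos hc]
        have h8 := mul_nonneg hi1 (hterm ω)
        linarith only [h8]
  -- assembly
  have hsplit := Finset.sum_le_sum fun ω (_ : ω ∈ Finset.univ) => hdich ω
  rw [Finset.sum_add_distrib] at hsplit
  have hL : (∑ ω, (1 - (if |Y ω - d| ≤ 2 * u * d then (1:ℝ) else 0)) * (μ ω * X ω))
      = S - ∑ ω, μ ω * ((if |Y ω - d| ≤ 2 * u * d then (1:ℝ) else 0) * X ω) := by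
    have hc : ∀ ω ∈ Finset.univ, (1 - (if |Y ω - d| ≤ 2 * u * d then (1:ℝ) else 0)) * (μ ω * X ω)
        = μ ω * X ω - μ ω * ((if |Y ω - d| ≤ 2 * u * d then (1:ℝ) else 0) * X ω) := by
      intro ω _; ring
    rw [Finset.sum_congr rfl hc, Finset.sum_sub_distrib, hSdef]
  rw [hL] at hsplit
  have hu2 : u ^ 2 ≤ u / 4 := by
    have h1 : u * u ≤ u * (1 / 4) :=
      mul_le_mul_of_nonneg_left (by linarith only [hu14]) hu0
    nlinarith [h1]
  have hu8 : u ^ 8 ≤ u / 4 := by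
    have h1 : u ^ 8 ≤ u ^ 2 := pow_le_pow_of_le_one hu0 hu1 (by norm_num)
    linarith only [h1, hu2]
  have hfin : (3 / 4) * u ^ 2 * S + 4 * ε * S ≤ 4 * u * S := by
    rw [hεu]
    have h1 := mul_le_mul_of_nonneg_right hu2 hS0
    have h2 := mul_le_mul_of_nonneg_right hu8 hS0
    linarith only [h1, h2, mul_nonneg hu0 hS0]
  linarith only [hcheb, hneg, hsplit, hfin]
end

section
/- For any nonnegative random variables X and any real-valued random variable Y on a finite probability space, and any natural number t ≥ 1, one has E[X]^{2^t − 1} · E[X·Y^{2^t}] ≥ E[XY]^{2^t}. -/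
open Finset

lemma cs_step {Ω : Type*} [Fintype Ω] (μ X Z : Ω → ℝ)
    (hμ0 : ∀ ω, 0 ≤ μ ω) (hX : ∀ ω, 0 ≤ X ω) :
    (∑ ω, μ ω * (X ω * Z ω)) ^ 2
      ≤ (∑ ω, μ ω * X ω) * (∑ ω, μ ω * (X ω * Z ω ^ 2)) := by
  have h := Finset.sum_mul_sq_le_sq_mul_sq Finset.univ
      (fun ω => Real.sqrt (μ ω * X ω)) (fun ω => Real.sqrt (μ ω * X ω) * Z ω)
  have hnn : ∀ ω : Ω, 0 ≤ μ ω * X ω := fun ω => mul_nonneg (hμ0 ω) (hX ω)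
  have e1 : ∀ ω : Ω, Real.sqrt (μ ω * X ω) * (Real.sqrt (μ ω * X ω) * Z ω)
      = μ ω * (X ω * Z ω) := by
    intro ω
    rw [← mul_assoc, Real.mul_self_sqrt (hnn ω), mul_assoc]
  have e2 : ∀ ω : Ω, Real.sqrt (μ ω * X ω) ^ 2 = μ ω * X ω := fun ω =>
    Real.sq_sqrt (hnn ω)
  have e3 : ∀ ω : Ω, (Real.sqrt (μ ω * X ω) * Z ω) ^ 2 = μ ω * (X ω * Z ω ^ 2) := by
    intro ω
    rw [mul_pow, e2, mul_assoc]
  simpa only [e1, e2, e3] using h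

/-- iterated Cauchy–Schwarz: on a finite probability space with
probability mass function `μ`, for any nonnegative `X`, any real `Y` and any `t ≥ 1`,
`E[X]^{2^t − 1} · E[X·Y^{2^t}] ≥ E[XY]^{2^t}`. -/
theorem iterated_cauchy_schwarz {Ω : Type*} [Fintype Ω] (μ X Y : Ω → ℝ)
    (hμ0 : ∀ ω, 0 ≤ μ ω) (hμ1 : (∑ ω, μ ω) = 1)
    (hX : ∀ ω, 0 ≤ X ω) (t : ℕ) (ht : 1 ≤ t) :
    (∑ ω, μ ω * (X ω * Y ω)) ^ (2 ^ t)
      ≤ (∑ ω, μ ω * X ω) ^ (2 ^ t - 1) * (∑ ω, μ ω * (X ω * Y ω ^ (2 ^ t))) := by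
  have hEX : 0 ≤ ∑ ω, μ ω * X ω :=
    Finset.sum_nonneg fun ω _ => mul_nonneg (hμ0 ω) (hX ω)
  induction t with
  | zero => omega
  | succ t ih =>
    rcases Nat.eq_or_lt_of_le ht with h1 | h1
    · -- t + 1 = 1
      have ht0 : t = 0 := by omega
      subst ht0
      simpa [pow_one] using cs_step μ X Y hμ0 hX
    · have ht' : 1 ≤ t := by omega
      have IH := ih ht'
      have h2t : 1 ≤ 2 ^ t := Nat.one_le_two_pow
      have hLnn : (0:ℝ) ≤ (∑ ω, μ ω * (X ω * Y ω)) ^ (2 ^ t) := by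
        have : 2 ^ t = 2 * 2 ^ (t - 1) := by
          rw [← pow_succ']
          congr 1
          omega
        rw [this, pow_mul]
        positivity
      have sq1 : ((∑ ω, μ ω * (X ω * Y ω)) ^ (2 ^ t)) ^ 2
          ≤ ((∑ ω, μ ω * X ω) ^ (2 ^ t - 1) * (∑ ω, μ ω * (X ω * Y ω ^ (2 ^ t)))) ^ 2 :=
        pow_le_pow_left₀ hLnn IH 2
      have key : (∑ ω, μ ω * (X ω * Y ω ^ (2 ^ t))) ^ 2
          ≤ (∑ ω, μ ω * X ω) * (∑ ω, μ ω * (X ω * Y ω ^ (2 ^ (t + 1)))) := by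
        have h := cs_step μ X (fun ω => Y ω ^ (2 ^ t)) hμ0 hX
        have e : ∀ ω : Ω, (Y ω ^ (2 ^ t)) ^ 2 = Y ω ^ (2 ^ (t + 1)) := fun ω => by
          rw [← pow_mul, ← pow_succ]
        simpa only [e] using h
      calc (∑ ω, μ ω * (X ω * Y ω)) ^ (2 ^ (t + 1))
          = ((∑ ω, μ ω * (X ω * Y ω)) ^ (2 ^ t)) ^ 2 := by
            rw [← pow_mul, pow_succ]
        _ ≤ ((∑ ω, μ ω * X ω) ^ (2 ^ t - 1) * (∑ ω, μ ω * (X ω * Y ω ^ (2 ^ t)))) ^ 2 := sq1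
        _ = (∑ ω, μ ω * X ω) ^ (2 * (2 ^ t - 1)) * (∑ ω, μ ω * (X ω * Y ω ^ (2 ^ t))) ^ 2 := by
            rw [mul_pow, ← pow_mul, mul_comm (2 ^ t - 1) 2]
        _ ≤ (∑ ω, μ ω * X ω) ^ (2 * (2 ^ t - 1)) *
              ((∑ ω, μ ω * X ω) * (∑ ω, μ ω * (X ω * Y ω ^ (2 ^ (t + 1))))) := by
            exact mul_le_mul_of_nonneg_left key (pow_nonneg hEX _)
        _ = (∑ ω, μ ω * X ω) ^ (2 ^ (t + 1) - 1) * (∑ ω, μ ω * (X ω * Y ω ^ (2 ^ (t + 1)))) := by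
            rw [← mul_assoc, ← pow_succ]
            congr 2
            have : 1 ≤ 2 ^ t := Nat.one_le_two_pow
            omega
end

section
/- Let k ≥ 2, let V₁, …, V_k be finite nonempty vertex sets, and let H be a weighted k-partite k-graph on these parts (a nonnegative weight function on crossing subsets). Fix an index i and vectors a, b, c ∈ {0,1,2}^k agreeing on all coordinates j ≠ i, with a_i = 0, b_i = 1, c_i = 2. Then H(Oct(c)) · H(Oct(a)) ≥ H(Oct(b))², where H(Oct(s)) denotes the expected weight of a uniformly random partite homomorphism from the octahedron complex Oct(s) to H. -/
open Finset

/-- The octahedron count `H(Oct(s))` for a weighted `k`-partite `k`-graph with parts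
`V j` and weight function `h` on crossing sets (encoded as partial tuples, `none`
meaning the part is unused): choose `s j` vertices uniformly at random (with
replacement) from each part and take the expected product of `h` over all nonempty
crossing edges of the resulting octahedron. -/
noncomputable def octCount {k : ℕ} (V : Fin k → Type*) [∀ j, Fintype (V j)]
    (h : (∀ j, Option (V j)) → ℝ) (s : Fin k → ℕ) : ℝ :=
  (∑ x : ∀ j, Fin (s j) → V j,
      ∏ ω : ∀ j, Option (Fin (s j)),
        if ∀ j, ω j = none then 1 else h fun j => (ω j).map (x j)) /
    (Fintype.card (∀ j, Fin (s j) → V j) : ℝ)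

section CSAux

variable {k : ℕ} (V : Fin k → Type*) [∀ j, Fintype (V j)]
  (h : (∀ j, Option (V j)) → ℝ) (i : Fin k)

/-- The partial tuple determined by the data off coordinate `i`. -/
def baseTup (r : {j : Fin k // j ≠ i} → ℕ)
    (y : ∀ j : {j : Fin k // j ≠ i}, Fin (r j) → V j.1)
    (ω : ∀ j : {j : Fin k // j ≠ i}, Option (Fin (r j))) : ∀ j, Option (V j) :=
  fun j => if hj : j = i then none else ((ω ⟨j, hj⟩).map (y ⟨j, hj⟩))

/-- The weight of the octahedron missing coordinate `i`. -/
noncomputable def Afun (r : {j : Fin k // j ≠ i} → ℕ)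
    (y : ∀ j : {j : Fin k // j ≠ i}, Fin (r j) → V j.1) : ℝ :=
  ∏ ω : ∀ j : {j : Fin k // j ≠ i}, Option (Fin (r j)),
    if ∀ j', ω j' = none then 1 else h (baseTup V i r y ω)

/-- The weight of the edges through a fixed vertex `v` in part `i`. -/
noncomputable def Bfun (r : {j : Fin k // j ≠ i} → ℕ)
    (y : ∀ j : {j : Fin k // j ≠ i}, Fin (r j) → V j.1) (v : V i) : ℝ :=
  ∏ ω : ∀ j : {j : Fin k // j ≠ i}, Option (Fin (r j)),
    h (Function.update (baseTup V i r y ω) i (some v))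

noncomputable def Sfun (r : {j : Fin k // j ≠ i} → ℕ)
    (y : ∀ j : {j : Fin k // j ≠ i}, Fin (r j) → V j.1) : ℝ :=
  ∑ v : V i, Bfun V h i r y v

/-- The factored form of the octahedron count. -/
noncomputable def octRHS (r : {j : Fin k // j ≠ i} → ℕ) (m : ℕ) : ℝ :=
  (∑ y : ∀ j : {j : Fin k // j ≠ i}, Fin (r j) → V j.1,
      Afun V h i r y * Sfun V h i r y ^ m) /
    ((Fintype.card (V i) : ℝ) ^ m *
      (Fintype.card (∀ j : {j : Fin k // j ≠ i}, Fin (r j) → V j.1) : ℝ))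

lemma octRHS_congr {r r' : {j : Fin k // j ≠ i} → ℕ} (hrr : r = r') (m : ℕ) :
    octRHS V h i r m = octRHS V h i r' m := by subst hrr; rfl

lemma master (s : Fin k → ℕ) :
    octCount V h s = octRHS V h i (fun j => s j.1) (s i) := by
  classical
  set r : {j : Fin k // j ≠ i} → ℕ := fun j => s j.1 with hr
  set e := Equiv.piSplitAt i fun j => Fin (s j) → V j with he
  set e2 := Equiv.piSplitAt i fun j => Option (Fin (s j)) with he2
  have hω : ∀ (o : Option (Fin (s i)))
      (ω' : ∀ j : {j : Fin k // j ≠ i}, Option (Fin (r j))) (j : Fin k) (hj : j ≠ i),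
      e2.symm (o, ω') j = ω' ⟨j, hj⟩ := by
    intro o ω' j hj
    simp [he2, Equiv.piSplitAt_symm_apply, hj]
  have hωi : ∀ (o : Option (Fin (s i)))
      (ω' : ∀ j : {j : Fin k // j ≠ i}, Option (Fin (r j))),
      e2.symm (o, ω') i = o := by
    intro o ω'
    simp [he2, Equiv.piSplitAt_symm_apply]
  have hx : ∀ (xi : Fin (s i) → V i)
      (y : ∀ j : {j : Fin k // j ≠ i}, Fin (r j) → V j.1) (j : Fin k) (hj : j ≠ i),
      e.symm (xi, y) j = y ⟨j, hj⟩ := by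
    intro xi y j hj
    simp [he, Equiv.piSplitAt_symm_apply, hj]
  have hxi : ∀ (xi : Fin (s i) → V i)
      (y : ∀ j : {j : Fin k // j ≠ i}, Fin (r j) → V j.1),
      e.symm (xi, y) i = xi := by
    intro xi y
    simp [he, Equiv.piSplitAt_symm_apply]
  have hN : (∑ x : ∀ j, Fin (s j) → V j,
        ∏ ω : ∀ j, Option (Fin (s j)),
          if ∀ j, ω j = none then 1 else h fun j => (ω j).map (x j))
      = ∑ y : ∀ j : {j : Fin k // j ≠ i}, Fin (r j) → V j.1,
          Afun V h i r y * Sfun V h i r y ^ s i := by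
    have step0 : (∑ x : ∀ j, Fin (s j) → V j,
          ∏ ω : ∀ j, Option (Fin (s j)),
            if ∀ j, ω j = none then 1 else h fun j => (ω j).map (x j))
        = ∑ p : (Fin (s i) → V i) × (∀ j : {j : Fin k // j ≠ i}, Fin (r j) → V j.1),
            ∏ ω : ∀ j, Option (Fin (s j)),
              if ∀ j, ω j = none then 1
              else h fun j => (ω j).map (e.symm p j) := by
      refine Fintype.sum_equiv e _ _ fun x => ?_
      rw [Equiv.symm_apply_apply]
    rw [step0, Fintype.sum_prod_type]
    have step1 : ∀ (xi : Fin (s i) → V i)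
        (y : ∀ j : {j : Fin k // j ≠ i}, Fin (r j) → V j.1),
        (∏ ω : ∀ j, Option (Fin (s j)),
            if ∀ j, ω j = none then 1
            else h fun j => (ω j).map (e.symm (xi, y) j))
          = Afun V h i r y * ∏ t : Fin (s i), Bfun V h i r y (xi t) := by
      intro xi y
      have split : (∏ ω : ∀ j, Option (Fin (s j)),
            if ∀ j, ω j = none then 1
            else h fun j => (ω j).map (e.symm (xi, y) j))
          = ∏ q : Option (Fin (s i)) × (∀ j : {j : Fin k // j ≠ i}, Option (Fin (r j))),
              (if ∀ j, e2.symm q j = none then 1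
               else h fun j => (e2.symm q j).map (e.symm (xi, y) j)) := by
        refine Fintype.prod_equiv e2 _ _ fun ω => ?_
        rw [Equiv.symm_apply_apply]
      rw [split, Fintype.prod_prod_type, Fintype.prod_option]
      congr 1
      · refine Finset.prod_congr rfl fun ω' _ => ?_
        have hc : (∀ j, e2.symm (none, ω') j = none) ↔ (∀ j', ω' j' = none) := by
          constructor
          · intro H j'
            have := H j'.1
            rwa [hω none ω' j'.1 j'.2] at this
          · intro H j
            by_cases hj : j = i
            · subst hj; rw [hωi]
            · rw [hω none ω' j hj]; exact H _
        have hv : (fun j => (e2.symm (none, ω') j).map (e.symm (xi, y) j))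
            = baseTup V i r y ω' := by
          funext j
          by_cases hj : j = i
          · subst hj
            rw [hωi]
            simp [baseTup]
          · rw [hω none ω' j hj, hx xi y j hj]
            simp [baseTup, hj]
        rw [hv]
        exact if_congr hc rfl rfl
      · refine Finset.prod_congr rfl fun t _ => ?_
        refine Finset.prod_congr rfl fun ω' _ => ?_
        have hcf : ¬ ∀ j, e2.symm (some t, ω') j = none := by
          intro H
          have := H i
          rw [hωi] at this
          exact Option.some_ne_none _ this
        rw [if_neg hcf]
        congr 1
        funext j
        by_cases hj : j = i
        · subst hj
          rw [hωi, hxi]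
          simp
        · rw [hω (some t) ω' j hj, hx xi y j hj, Function.update_of_ne hj]
          simp [baseTup, hj]
    calc (∑ xi : Fin (s i) → V i,
            ∑ y : ∀ j : {j : Fin k // j ≠ i}, Fin (r j) → V j.1,
              ∏ ω : ∀ j, Option (Fin (s j)),
                if ∀ j, ω j = none then 1
                else h fun j => (ω j).map (e.symm (xi, y) j))
        = ∑ xi : Fin (s i) → V i,
            ∑ y : ∀ j : {j : Fin k // j ≠ i}, Fin (r j) → V j.1,
              Afun V h i r y * ∏ t : Fin (s i), Bfun V h i r y (xi t) := by
          refine Finset.sum_congr rfl fun xi _ => Finset.sum_congr rfl fun y _ => ?_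
          exact step1 xi y
      _ = ∑ y : ∀ j : {j : Fin k // j ≠ i}, Fin (r j) → V j.1,
            Afun V h i r y * Sfun V h i r y ^ s i := by
          rw [Finset.sum_comm]
          refine Finset.sum_congr rfl fun y _ => ?_
          rw [← Finset.mul_sum]
          congr 1
          rw [Sfun, Fintype.sum_pow]
  have hD : Fintype.card (∀ j, Fin (s j) → V j)
      = Fintype.card (V i) ^ s i
        * Fintype.card (∀ j : {j : Fin k // j ≠ i}, Fin (r j) → V j.1) := by
    rw [Fintype.card_congr e, Fintype.card_prod, Fintype.card_fun, Fintype.card_fin]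
  rw [octCount, octRHS, hN, hD]
  push_cast
  ring

end CSAux

/-- Lemma `CSoctlow`: for `k ≥ 2`, a weighted `k`-partite `k`-graph `h`
with nonnegative weights, an index `i`, and vectors `a, b, c ∈ {0,1,2}^k` agreeing off
coordinate `i` with `a i = 0`, `b i = 1`, `c i = 2`, we have
`H(Oct(c))·H(Oct(a)) ≥ H(Oct(b))²`. -/
theorem cs_oct_lower {k : ℕ} (hk : 2 ≤ k) (V : Fin k → Type*) [∀ j, Fintype (V j)]
    [∀ j, Nonempty (V j)] (h : (∀ j, Option (V j)) → ℝ) (hpos : ∀ e, 0 ≤ h e)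
    (i : Fin k) (a b c : Fin k → ℕ) (hcr : ∀ j, c j ≤ 2)
    (hagree : ∀ j, j ≠ i → a j = b j ∧ b j = c j)
    (ha : a i = 0) (hb : b i = 1) (hc : c i = 2) :
    octCount V h b ^ 2 ≤ octCount V h c * octCount V h a := by
  classical
  set r : {j : Fin k // j ≠ i} → ℕ := fun j => b j.1 with hrdef
  have hra : (fun j : {j : Fin k // j ≠ i} => a j.1) = r :=
    funext fun j => (hagree j.1 j.2).1
  have hrc : (fun j : {j : Fin k // j ≠ i} => c j.1) = r :=
    funext fun j => ((hagree j.1 j.2).2).symm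
  have Ha : octCount V h a = octRHS V h i r 0 := by
    rw [master V h i a, ha, octRHS_congr V h i hra]
  have Hb : octCount V h b = octRHS V h i r 1 := by
    rw [master V h i b, hb]
  have Hc : octCount V h c = octRHS V h i r 2 := by
    rw [master V h i c, hc, octRHS_congr V h i hrc]
  rw [Ha, Hb, Hc, octRHS, octRHS, octRHS]
  set n : ℝ := (Fintype.card (V i) : ℝ) with hn
  set cY : ℝ :=
    (Fintype.card (∀ j : {j : Fin k // j ≠ i}, Fin (r j) → V j.1) : ℝ) with hcY
  have hnpos : (0 : ℝ) < n := by
    rw [hn]; exact_mod_cast Fintype.card_pos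
  have hcYpos : (0 : ℝ) < cY := by
    rw [hcY]; exact_mod_cast Fintype.card_pos
  have hA : ∀ y, 0 ≤ Afun V h i r y := by
    intro y
    refine Finset.prod_nonneg fun ω _ => ?_
    split_ifs
    · exact zero_le_one
    · exact hpos _
  have key : (∑ y, Afun V h i r y * Sfun V h i r y) ^ 2
      ≤ (∑ y, Afun V h i r y) * ∑ y, Afun V h i r y * Sfun V h i r y ^ 2 := by
    have cs := Finset.sum_mul_sq_le_sq_mul_sq Finset.univ
      (fun y => Real.sqrt (Afun V h i r y))
      (fun y => Real.sqrt (Afun V h i r y) * Sfun V h i r y)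
    have l1 : ∑ y, Real.sqrt (Afun V h i r y)
          * (Real.sqrt (Afun V h i r y) * Sfun V h i r y)
        = ∑ y, Afun V h i r y * Sfun V h i r y :=
      Finset.sum_congr rfl fun y _ => by
        rw [← mul_assoc, Real.mul_self_sqrt (hA y)]
    have l2 : ∑ y, Real.sqrt (Afun V h i r y) ^ 2 = ∑ y, Afun V h i r y :=
      Finset.sum_congr rfl fun y _ => Real.sq_sqrt (hA y)
    have l3 : ∑ y, (Real.sqrt (Afun V h i r y) * Sfun V h i r y) ^ 2
        = ∑ y, Afun V h i r y * Sfun V h i r y ^ 2 :=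
      Finset.sum_congr rfl fun y _ => by rw [mul_pow, Real.sq_sqrt (hA y)]
    rw [l1, l2, l3] at cs
    exact cs
  simp only [pow_one, pow_zero, mul_one, one_mul]
  rw [div_mul_div_comm, div_pow]
  have hden : (n * cY) ^ 2 = n ^ 2 * cY * cY := by ring
  rw [hden]
  refine (div_le_div_iff_of_pos_right (by positivity)).2 ?_
  calc (∑ y, Afun V h i r y * Sfun V h i r y) ^ 2
      ≤ (∑ y, Afun V h i r y) * ∑ y, Afun V h i r y * Sfun V h i r y ^ 2 := key
    _ = (∑ y, Afun V h i r y * Sfun V h i r y ^ 2) * ∑ y, Afun V h i r y := by ring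
end

section
/- Let k ≥ 2 and let G and Γ be weighted k-partite k-graphs on the same vertex parts with g(e) = γ(e) for all crossing edges e of size less than k. Let s, s′ ∈ {1,2}^k with s ≥ s′ coordinatewise, and suppose s has exactly t more coordinates equal to 2 than s′. Suppose G(Oct(s′)) = d·Γ(Oct(s′)) for some d ≥ 0, and suppose Γ is η-minimal for some η ≥ 0. Then G(Oct(s)) ≥ (d^{2^t} / (1+η)^{2^t − 1}) · Γ(Oct(s)). -/
open Finset

/-- A weighted `k`-partite `k`-graph `h` is `η`-minimal if for every index `i` and all
vectors `a, b, c ∈ {0,1,2}^k` agreeing off coordinate `i` with `a i = 0`, `b i = 1`,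
`c i = 2`, we have `H(Oct(c))·H(Oct(a)) ≤ (1+η)·H(Oct(b))²`. -/
def IsMinimal {k : ℕ} (V : Fin k → Type*) [∀ j, Fintype (V j)]
    (h : (∀ j, Option (V j)) → ℝ) (η : ℝ) : Prop :=
  ∀ (i : Fin k) (a b c : Fin k → ℕ), (∀ j, c j ≤ 2) →
    (∀ j, j ≠ i → a j = b j ∧ b j = c j) → a i = 0 → b i = 1 → c i = 2 →
    octCount V h c * octCount V h a ≤ (1 + η) * octCount V h b ^ 2

set_option linter.unusedSectionVars false

namespace OctAux
variable {k : ℕ} {V : Fin k → Type*} [∀ j, Fintype (V j)]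

variable (i : Fin k)

def nv (w : {j : Fin k // j ≠ i} → ℕ) (m : ℕ) : Fin k → ℕ :=
  fun j => if h : j = i then m else w ⟨j, h⟩

variable (w : {j : Fin k // j ≠ i} → ℕ)

lemma nv_self (m : ℕ) : nv i w m i = m := dif_pos rfl
lemma nv_ne (m : ℕ) (j : {j : Fin k // j ≠ i}) : nv i w m ↑j = w j := dif_neg j.2

lemma split_same {β : Fin k → Type*} (f : β i × ∀ j : {j : Fin k // j ≠ i}, β j) :
    (Equiv.piSplitAt i β).symm f i = f.1 :=
  congrArg Prod.fst ((Equiv.piSplitAt i β).apply_symm_apply f)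

lemma split_ne {β : Fin k → Type*} (f : β i × ∀ j : {j : Fin k // j ≠ i}, β j)
    (j : {j : Fin k // j ≠ i}) :
    (Equiv.piSplitAt i β).symm f ↑j = f.2 j :=
  congrFun (congrArg Prod.snd ((Equiv.piSplitAt i β).apply_symm_apply f)) j

lemma forall_split (P : Fin k → Prop) :
    (∀ j, P j) ↔ P i ∧ ∀ j : {j : Fin k // j ≠ i}, P ↑j := by
  constructor
  · exact fun H => ⟨H i, fun j => H j⟩
  · rintro ⟨h1, h2⟩ j
    by_cases hj : j = i
    · exact hj ▸ h1
    · exact h2 ⟨j, hj⟩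

/-- build an edge from the part at `i` and the parts away from `i` -/
def ed (o : Option (V i)) (e' : ∀ j : {j : Fin k // j ≠ i}, Option (V j)) :
    ∀ j, Option (V j) := (Equiv.piSplitAt i fun j => Option (V j)).symm (o, e')

noncomputable def F0 (h : (∀ j, Option (V j)) → ℝ)
    (y : ∀ j : {j : Fin k // j ≠ i}, Fin (w j) → V j) : ℝ :=
  ∏ ω : ∀ j : {j : Fin k // j ≠ i}, Option (Fin (w j)),
    if ∀ j, ω j = none then 1 else h (ed i none fun j => (ω j).map (y j))

noncomputable def F1 (h : (∀ j, Option (V j)) → ℝ)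
    (y : ∀ j : {j : Fin k // j ≠ i}, Fin (w j) → V j) (v : V i) : ℝ :=
  ∏ ω : ∀ j : {j : Fin k // j ≠ i}, Option (Fin (w j)),
    h (ed i (some v) fun j => (ω j).map (y j))

def eX (m : ℕ) : (∀ j, Fin (nv i w m j) → V j) ≃
    ((Fin m → V i) × ∀ j : {j : Fin k // j ≠ i}, Fin (w j) → V j) :=
  (Equiv.piSplitAt i fun j => Fin (nv i w m j) → V j).trans
    ((Equiv.arrowCongr (finCongr (nv_self i w m)) (Equiv.refl (V i))).prodCongr
      (Equiv.piCongrRight fun j => Equiv.arrowCongr (finCongr (nv_ne i w m j)) (Equiv.refl _)))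

def eO (m : ℕ) : (∀ j, Option (Fin (nv i w m j))) ≃
    (Option (Fin m) × ∀ j : {j : Fin k // j ≠ i}, Option (Fin (w j))) :=
  (Equiv.piSplitAt i fun j => Option (Fin (nv i w m j))).trans
    ((Equiv.optionCongr (finCongr (nv_self i w m))).prodCongr
      (Equiv.piCongrRight fun j => Equiv.optionCongr (finCongr (nv_ne i w m j))))

lemma eX_symm_self (m : ℕ) (z : (Fin m → V i) × ∀ j : {j : Fin k // j ≠ i}, Fin (w j) → V j) :
    (eX (V := V) i w m).symm z i = fun r => z.1 (finCongr (nv_self i w m) r) := by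
  obtain ⟨p, y⟩ := z
  simp [eX, Equiv.symm_trans_apply, split_same]
  rfl

lemma eX_symm_ne (m : ℕ) (z : (Fin m → V i) × ∀ j : {j : Fin k // j ≠ i}, Fin (w j) → V j)
    (j : {j : Fin k // j ≠ i}) :
    (eX (V := V) i w m).symm z ↑j = fun r => z.2 j (finCongr (nv_ne i w m j) r) := by
  obtain ⟨p, y⟩ := z
  obtain ⟨j, hj⟩ := j
  simp [eX, Equiv.symm_trans_apply, split_ne, dif_neg hj]
  rfl

lemma eO_symm_self (m : ℕ) (z : Option (Fin m) × ∀ j : {j : Fin k // j ≠ i}, Option (Fin (w j))) :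
    (eO (k := k) i w m).symm z i = z.1.map (finCongr (nv_self i w m)).symm := by
  obtain ⟨o, ω⟩ := z
  simp [eO, Equiv.symm_trans_apply, split_same]
  rfl

lemma eO_symm_ne (m : ℕ) (z : Option (Fin m) × ∀ j : {j : Fin k // j ≠ i}, Option (Fin (w j)))
    (j : {j : Fin k // j ≠ i}) :
    (eO (k := k) i w m).symm z ↑j = (z.2 j).map (finCongr (nv_ne i w m j)).symm := by
  obtain ⟨o, ω⟩ := z
  obtain ⟨j, hj⟩ := j
  simp [eO, Equiv.symm_trans_apply, split_ne, dif_neg hj]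
  rfl


lemma edge_eq (m : ℕ) (o : Option (Fin m)) (ω : ∀ j : {j : Fin k // j ≠ i}, Option (Fin (w j)))
    (z : (Fin m → V i) × ∀ j : {j : Fin k // j ≠ i}, Fin (w j) → V j) :
    (fun j => (((eO (k := k) i w m).symm (o, ω)) j).map ((eX (V := V) i w m).symm z j))
      = ed i (o.map z.1) (fun j => (ω j).map (z.2 j)) := by
  funext j
  by_cases hj : j = i
  · subst hj
    rw [eO_symm_self, eX_symm_self]
    show _ = (Equiv.piSplitAt j fun j => Option (V j)).symm _ j
    rw [split_same]
    dsimp only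
    cases o <;> rfl
  · have : j = ((⟨j, hj⟩ : {j : Fin k // j ≠ i}) : Fin k) := rfl
    rw [this, eO_symm_ne, eX_symm_ne]
    show _ = (Equiv.piSplitAt i fun j => Option (V j)).symm _ ↑(⟨j, hj⟩ : {j : Fin k // j ≠ i})
    rw [split_ne]
    dsimp only
    cases ω ⟨j, hj⟩ <;> rfl

lemma cond_iff (m : ℕ) (o : Option (Fin m)) (ω : ∀ j : {j : Fin k // j ≠ i}, Option (Fin (w j))) :
    (∀ j, ((eO (k := k) i w m).symm (o, ω)) j = none) ↔ (o = none ∧ ∀ j', ω j' = none) := by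
  rw [forall_split i]
  constructor
  · rintro ⟨h1, h2⟩
    refine ⟨?_, fun j' => ?_⟩
    · rw [eO_symm_self] at h1
      simpa using h1
    · have := h2 j'
      rw [eO_symm_ne] at this
      simpa using this
  · rintro ⟨h1, h2⟩
    refine ⟨?_, fun j' => ?_⟩
    · rw [eO_symm_self]; simp [h1]
    · rw [eO_symm_ne]; simp [h2 j']

lemma octSum_eq (h : (∀ j, Option (V j)) → ℝ) (m : ℕ) :
    (∑ x : ∀ j, Fin (nv i w m j) → V j,
      ∏ ω : ∀ j, Option (Fin (nv i w m j)),
        if ∀ j, ω j = none then 1 else h fun j => (ω j).map (x j))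
    = ∑ y : ∀ j : {j : Fin k // j ≠ i}, Fin (w j) → V j,
        F0 i w h y * (∑ v : V i, F1 i w h y v) ^ m := by
  classical
  have key : ∀ z : (Fin m → V i) × (∀ j : {j : Fin k // j ≠ i}, Fin (w j) → V j),
      (∏ ω : ∀ j, Option (Fin (nv i w m j)),
        if ∀ j, ω j = none then (1:ℝ) else h fun j => (ω j).map ((eX (V := V) i w m).symm z j))
      = F0 i w h z.2 * ∏ r : Fin m, F1 i w h z.2 (z.1 r) := by
    intro z
    rw [← Equiv.prod_comp (eO (k := k) i w m).symm
      (fun ω => if ∀ j, ω j = none then (1:ℝ) else h fun j => (ω j).map ((eX (V := V) i w m).symm z j))]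
    rw [Fintype.prod_prod_type, Fintype.prod_option]
    congr 1
    · apply Finset.prod_congr rfl
      intro ω _
      rw [show (fun j => (((eO (k := k) i w m).symm (none, ω)) j).map ((eX (V := V) i w m).symm z j))
            = ed i ((Option.map z.1) none) (fun j => (ω j).map (z.2 j)) from edge_eq i w m none ω z]
      simp only [Option.map_none]
      rw [if_congr (cond_iff i w m none ω) rfl rfl]
      simp
    · apply Finset.prod_congr rfl
      intro r _
      apply Finset.prod_congr rfl
      intro ω _
      rw [show (fun j => (((eO (k := k) i w m).symm (some r, ω)) j).map ((eX (V := V) i w m).symm z j))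
            = ed i ((Option.map z.1) (some r)) (fun j => (ω j).map (z.2 j)) from edge_eq i w m (some r) ω z]
      rw [if_neg]
      · rfl
      · rw [cond_iff]
        simp
  calc (∑ x : ∀ j, Fin (nv i w m j) → V j,
      ∏ ω : ∀ j, Option (Fin (nv i w m j)),
        if ∀ j, ω j = none then 1 else h fun j => (ω j).map (x j))
      = ∑ z : (Fin m → V i) × (∀ j : {j : Fin k // j ≠ i}, Fin (w j) → V j),
          ∏ ω : ∀ j, Option (Fin (nv i w m j)),
            if ∀ j, ω j = none then (1:ℝ) else h fun j => (ω j).map ((eX (V := V) i w m).symm z j) :=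
        (Equiv.sum_comp (eX (V := V) i w m).symm _).symm
    _ = ∑ z : (Fin m → V i) × (∀ j : {j : Fin k // j ≠ i}, Fin (w j) → V j),
          F0 i w h z.2 * ∏ r : Fin m, F1 i w h z.2 (z.1 r) := Finset.sum_congr rfl fun z _ => key z
    _ = ∑ y : ∀ j : {j : Fin k // j ≠ i}, Fin (w j) → V j,
        F0 i w h y * (∑ v : V i, F1 i w h y v) ^ m := by
        rw [Fintype.sum_prod_type, Finset.sum_comm]
        apply Finset.sum_congr rfl
        intro y _
        dsimp only
        rw [← Finset.mul_sum]
        congr 1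
        rw [← Fintype.piFinset_univ, ← Finset.prod_univ_sum]
        simp


lemma octCount_nv (h : (∀ j, Option (V j)) → ℝ) (m : ℕ) :
    octCount V h (nv i w m)
      = (∑ y : ∀ j : {j : Fin k // j ≠ i}, Fin (w j) → V j,
          F0 i w h y * (∑ v : V i, F1 i w h y v) ^ m) /
        ((Fintype.card (V i) : ℝ) ^ m *
          (Fintype.card (∀ j : {j : Fin k // j ≠ i}, Fin (w j) → V j) : ℝ)) := by
  rw [octCount, octSum_eq]
  congr 1
  rw [Fintype.card_congr (eX (V := V) i w m), Fintype.card_prod, Fintype.card_fun,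
    Fintype.card_fin]
  push_cast
  ring

lemma F0_nonneg (h : (∀ j, Option (V j)) → ℝ) (h0 : ∀ e, 0 ≤ h e)
    (y : ∀ j : {j : Fin k // j ≠ i}, Fin (w j) → V j) : 0 ≤ F0 i w h y :=
  Finset.prod_nonneg fun ω _ => by split; exacts [zero_le_one, h0 _]

lemma F1_nonneg (h : (∀ j, Option (V j)) → ℝ) (h0 : ∀ e, 0 ≤ h e)
    (y : ∀ j : {j : Fin k // j ≠ i}, Fin (w j) → V j) (v : V i) : 0 ≤ F1 i w h y v :=
  Finset.prod_nonneg fun ω _ => h0 _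

lemma S_nonneg (h : (∀ j, Option (V j)) → ℝ) (h0 : ∀ e, 0 ≤ h e)
    (y : ∀ j : {j : Fin k // j ≠ i}, Fin (w j) → V j) : 0 ≤ ∑ v : V i, F1 i w h y v :=
  Finset.sum_nonneg fun v _ => F1_nonneg i w h h0 y v

lemma octCount_nonneg (h : (∀ j, Option (V j)) → ℝ) (h0 : ∀ e, 0 ≤ h e) (n : Fin k → ℕ) :
    0 ≤ octCount V h n :=
  div_nonneg (Finset.sum_nonneg fun x _ => Finset.prod_nonneg fun ω _ => by
    split; exacts [zero_le_one, h0 _]) (Nat.cast_nonneg _)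

lemma F0_agree (g γ : (∀ j, Option (V j)) → ℝ)
    (hagree : ∀ e : ∀ j, Option (V j), (∃ j, e j = none) → g e = γ e)
    (y : ∀ j : {j : Fin k // j ≠ i}, Fin (w j) → V j) : F0 i w g y = F0 i w γ y := by
  apply Finset.prod_congr rfl
  intro ω _
  split
  · rfl
  · exact hagree _ ⟨i, split_same i _⟩

lemma cs_oct [∀ j, Nonempty (V j)] (h : (∀ j, Option (V j)) → ℝ) (h0 : ∀ e, 0 ≤ h e) :
    octCount V h (nv i w 1) ^ 2 ≤ octCount V h (nv i w 0) * octCount V h (nv i w 2) := by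
  have hD : (0:ℝ) < (Fintype.card (∀ j : {j : Fin k // j ≠ i}, Fin (w j) → V j) : ℝ) := by
    exact_mod_cast Fintype.card_pos
  have hV : (0:ℝ) < (Fintype.card (V i) : ℝ) := by exact_mod_cast Fintype.card_pos
  rw [octCount_nv, octCount_nv, octCount_nv, div_pow, div_mul_div_comm]
  have hden : ((Fintype.card (V i) : ℝ) ^ 1 *
      (Fintype.card (∀ j : {j : Fin k // j ≠ i}, Fin (w j) → V j) : ℝ)) ^ 2
      = ((Fintype.card (V i) : ℝ) ^ 0 *
          (Fintype.card (∀ j : {j : Fin k // j ≠ i}, Fin (w j) → V j) : ℝ)) *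
        ((Fintype.card (V i) : ℝ) ^ 2 *
          (Fintype.card (∀ j : {j : Fin k // j ≠ i}, Fin (w j) → V j) : ℝ)) := by ring
  rw [hden]
  apply div_le_div_of_nonneg_right ?_ (by positivity)
  have e1 : (∑ y : ∀ j : {j : Fin k // j ≠ i}, Fin (w j) → V j,
      F0 i w h y * (∑ v : V i, F1 i w h y v) ^ 1)
      = ∑ y : ∀ j : {j : Fin k // j ≠ i}, Fin (w j) → V j,
        Real.sqrt (F0 i w h y) * (Real.sqrt (F0 i w h y) * (∑ v : V i, F1 i w h y v)) :=
    Finset.sum_congr rfl fun y _ => by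
      rw [pow_one, ← mul_assoc, Real.mul_self_sqrt (F0_nonneg i w h h0 y)]
  have e2 : (∑ y : ∀ j : {j : Fin k // j ≠ i}, Fin (w j) → V j,
      F0 i w h y * (∑ v : V i, F1 i w h y v) ^ 0)
      = ∑ y : ∀ j : {j : Fin k // j ≠ i}, Fin (w j) → V j, Real.sqrt (F0 i w h y) ^ 2 :=
    Finset.sum_congr rfl fun y _ => by
      rw [pow_zero, mul_one, Real.sq_sqrt (F0_nonneg i w h h0 y)]
  have e3 : (∑ y : ∀ j : {j : Fin k // j ≠ i}, Fin (w j) → V j,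
      F0 i w h y * (∑ v : V i, F1 i w h y v) ^ 2)
      = ∑ y : ∀ j : {j : Fin k // j ≠ i}, Fin (w j) → V j,
        (Real.sqrt (F0 i w h y) * (∑ v : V i, F1 i w h y v)) ^ 2 :=
    Finset.sum_congr rfl fun y _ => by
      rw [mul_pow, Real.sq_sqrt (F0_nonneg i w h h0 y)]
  rw [e1, e2, e3]
  exact Finset.sum_mul_sq_le_sq_mul_sq Finset.univ _ _

lemma zero_prop [∀ j, Nonempty (V j)] (h : (∀ j, Option (V j)) → ℝ) (h0 : ∀ e, 0 ≤ h e)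
    (hz : octCount V h (nv i w 0) = 0) : octCount V h (nv i w 2) = 0 := by
  have hD : (0:ℝ) < (Fintype.card (∀ j : {j : Fin k // j ≠ i}, Fin (w j) → V j) : ℝ) := by
    exact_mod_cast Fintype.card_pos
  have hV : (0:ℝ) < (Fintype.card (V i) : ℝ) := by exact_mod_cast Fintype.card_pos
  rw [octCount_nv] at hz ⊢
  rw [div_eq_zero_iff] at hz
  rcases hz with hz | hz
  swap
  · exact absurd hz (by positivity)
  have hzero : ∀ y ∈ (Finset.univ : Finset (∀ j : {j : Fin k // j ≠ i}, Fin (w j) → V j)),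
      F0 i w h y * (∑ v : V i, F1 i w h y v) ^ 0 = 0 :=
    (Finset.sum_eq_zero_iff_of_nonneg fun y _ => by
      have := F0_nonneg i w h h0 y; positivity).mp hz
  have : (∑ y : ∀ j : {j : Fin k // j ≠ i}, Fin (w j) → V j,
      F0 i w h y * (∑ v : V i, F1 i w h y v) ^ 2) = 0 := by
    apply Finset.sum_eq_zero
    intro y hy
    have h00 := hzero y hy
    rw [pow_zero, mul_one] at h00
    rw [h00, zero_mul]
  rw [this, zero_div]


lemma step [∀ j, Nonempty (V j)] (g γ : (∀ j, Option (V j)) → ℝ)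
    (hg0 : ∀ e, 0 ≤ g e) (hγ0 : ∀ e, 0 ≤ γ e)
    (hagree : ∀ e : ∀ j, Option (V j), (∃ j, e j = none) → g e = γ e)
    (η : ℝ) (hη : 0 ≤ η) (hmin : IsMinimal V γ η) (hw : ∀ j, w j ≤ 2)
    (d : ℝ) (hd : 0 ≤ d)
    (h1 : d * octCount V γ (nv i w 1) ≤ octCount V g (nv i w 1)) :
    d ^ 2 / (1 + η) * octCount V γ (nv i w 2) ≤ octCount V g (nv i w 2) := by
  have hη1 : (0:ℝ) < 1 + η := by linarith
  have hga : octCount V g (nv i w 0) = octCount V γ (nv i w 0) := by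
    rw [octCount_nv, octCount_nv]
    congr 1
    exact Finset.sum_congr rfl fun y _ => by
      rw [pow_zero, pow_zero, mul_one, mul_one, F0_agree i w g γ hagree]
  by_cases hA0 : octCount V γ (nv i w 0) = 0
  · rw [zero_prop i w γ hγ0 hA0, mul_zero]
    exact octCount_nonneg g hg0 _
  · have hApos : 0 < octCount V γ (nv i w 0) :=
      lt_of_le_of_ne (octCount_nonneg γ hγ0 _) (Ne.symm hA0)
    have hBγ : 0 ≤ octCount V γ (nv i w 1) := octCount_nonneg γ hγ0 _
    have hCSg := cs_oct i w g hg0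
    rw [hga] at hCSg
    have hminapp : octCount V γ (nv i w 2) * octCount V γ (nv i w 0)
        ≤ (1 + η) * octCount V γ (nv i w 1) ^ 2 := by
      refine hmin i (nv i w 0) (nv i w 1) (nv i w 2) ?_ ?_ (nv_self i w 0) (nv_self i w 1)
        (nv_self i w 2)
      · intro j
        by_cases hj : j = i
        · subst hj; rw [nv_self]
        · rw [show j = ↑(⟨j, hj⟩ : {j : Fin k // j ≠ i}) from rfl, nv_ne]; exact hw _
      · intro j hj
        constructor <;>
          rw [show j = ↑(⟨j, hj⟩ : {j : Fin k // j ≠ i}) from rfl, nv_ne, nv_ne]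
    have hsq : d ^ 2 * octCount V γ (nv i w 1) ^ 2 ≤ octCount V g (nv i w 1) ^ 2 := by
      rw [← mul_pow]
      exact pow_le_pow_left₀ (mul_nonneg hd hBγ) h1 2
    rw [div_mul_eq_mul_div, div_le_iff₀ hη1]
    have hmain : (d ^ 2 * octCount V γ (nv i w 2)) * octCount V γ (nv i w 0)
        ≤ (octCount V g (nv i w 2) * (1 + η)) * octCount V γ (nv i w 0) := by
      calc (d ^ 2 * octCount V γ (nv i w 2)) * octCount V γ (nv i w 0)
          = d ^ 2 * (octCount V γ (nv i w 2) * octCount V γ (nv i w 0)) := by ring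
        _ ≤ d ^ 2 * ((1 + η) * octCount V γ (nv i w 1) ^ 2) :=
            mul_le_mul_of_nonneg_left hminapp (by positivity)
        _ = (1 + η) * (d ^ 2 * octCount V γ (nv i w 1) ^ 2) := by ring
        _ ≤ (1 + η) * octCount V g (nv i w 1) ^ 2 :=
            mul_le_mul_of_nonneg_left hsq hη1.le
        _ ≤ (1 + η) * (octCount V γ (nv i w 0) * octCount V g (nv i w 2)) :=
            mul_le_mul_of_nonneg_left hCSg hη1.le
        _ = (octCount V g (nv i w 2) * (1 + η)) * octCount V γ (nv i w 0) := by ring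
    exact le_of_mul_le_mul_right hmain hApos

lemma main_induction {k : ℕ} (V : Fin k → Type*) [∀ j, Fintype (V j)] [∀ j, Nonempty (V j)]
    (g γ : (∀ j, Option (V j)) → ℝ) (hg0 : ∀ e, 0 ≤ g e) (hγ0 : ∀ e, 0 ≤ γ e)
    (hagree : ∀ e : ∀ j, Option (V j), (∃ j, e j = none) → g e = γ e)
    (η : ℝ) (hη : 0 ≤ η) (hmin : IsMinimal V γ η) :
    ∀ (t : ℕ) (s s' : Fin k → ℕ) (d : ℝ), 0 ≤ d →
      (∀ j, 1 ≤ s j ∧ s j ≤ 2) → (∀ j, 1 ≤ s' j ∧ s' j ≤ 2) → (∀ j, s' j ≤ s j) →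
      ((Finset.univ.filter fun j => s j = 2).card
        = (Finset.univ.filter fun j => s' j = 2).card + t) →
      d * octCount V γ s' ≤ octCount V g s' →
      d ^ 2 ^ t / (1 + η) ^ (2 ^ t - 1) * octCount V γ s ≤ octCount V g s := by
  intro t
  induction t with
  | zero =>
    intro s s' d hd hs hs' hle hcard hlow
    have hsub : (Finset.univ.filter fun j => s' j = 2)
        ⊆ (Finset.univ.filter fun j => s j = 2) := by
      intro j hj
      simp only [Finset.mem_filter, Finset.mem_univ, true_and] at hj ⊢
      have := hle j; have := (hs j).2; omega
    have heq : s = s' := by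
      funext j
      have h2 : ((Finset.univ.filter fun j => s' j = 2) : Finset (Fin k))
          = (Finset.univ.filter fun j => s j = 2) :=
        Finset.eq_of_subset_of_card_le hsub (by omega)
      by_cases hj2 : s j = 2
      · have hmem : j ∈ Finset.univ.filter fun j => s j = 2 := by simp [hj2]
        rw [← h2] at hmem
        simp only [Finset.mem_filter, Finset.mem_univ, true_and] at hmem
        omega
      · have h1s := (hs j).1; have h2s := (hs j).2
        have h1s' := (hs' j).1
        have := hle j
        omega
    rw [heq]
    simpa using hlow
  | succ t ih =>
    intro s s' d hd hs hs' hle hcard hlow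
    have hsub : (Finset.univ.filter fun j => s' j = 2)
        ⊆ (Finset.univ.filter fun j => s j = 2) := by
      intro j hj
      simp only [Finset.mem_filter, Finset.mem_univ, true_and] at hj ⊢
      have := hle j; have := (hs j).2; omega
    have hss : (Finset.univ.filter fun j => s' j = 2)
        ⊂ (Finset.univ.filter fun j => s j = 2) :=
      hsub.ssubset_of_ne (fun h => by rw [h] at hcard; omega)
    obtain ⟨i, hi_mem, hi_not⟩ := Finset.exists_of_ssubset hss
    simp only [Finset.mem_filter, Finset.mem_univ, true_and] at hi_mem hi_not
    have hs'i1 : s' i = 1 := by have := (hs' i).1; have := (hs' i).2; omega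
    set w : {j : Fin k // j ≠ i} → ℕ := fun j => s' ↑j with hwdef
    have hs'eq : s' = nv i w 1 := by
      funext j
      by_cases hj : j = i
      · subst hj; rw [nv_self]; exact hs'i1
      · rw [show j = ↑(⟨j, hj⟩ : {j : Fin k // j ≠ i}) from rfl, nv_ne]
    have hstep := step i w g γ hg0 hγ0 hagree η hη hmin (fun j => (hs' ↑j).2) d hd
      (by rw [← hs'eq]; exact hlow)
    have hη1 : (0:ℝ) < 1 + η := by linarith
    have hs''12 : ∀ j, 1 ≤ nv i w 2 j ∧ nv i w 2 j ≤ 2 := by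
      intro j
      by_cases hj : j = i
      · subst hj; rw [nv_self]; omega
      · rw [show j = ↑(⟨j, hj⟩ : {j : Fin k // j ≠ i}) from rfl, nv_ne]; exact hs' _
    have hle'' : ∀ j, nv i w 2 j ≤ s j := by
      intro j
      by_cases hj : j = i
      · subst hj; rw [nv_self]; omega
      · rw [show j = ↑(⟨j, hj⟩ : {j : Fin k // j ≠ i}) from rfl, nv_ne]; exact hle j
    have hins : (Finset.univ.filter fun j => nv i w 2 j = 2)
        = insert i (Finset.univ.filter fun j => s' j = 2) := by
      ext j
      simp only [Finset.mem_filter, Finset.mem_univ, true_and, Finset.mem_insert]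
      by_cases hj : j = i
      · subst hj; simp [nv_self]
      · rw [show j = ↑(⟨j, hj⟩ : {j : Fin k // j ≠ i}) from rfl, nv_ne]
        simp [hj, hwdef]
    have hcard'' : (Finset.univ.filter fun j => s j = 2).card
        = (Finset.univ.filter fun j => nv i w 2 j = 2).card + t := by
      rw [hins, Finset.card_insert_of_notMem (by
        simp only [Finset.mem_filter, Finset.mem_univ, true_and]; omega)]
      omega
    have hres := ih s (nv i w 2) (d ^ 2 / (1 + η))
      (div_nonneg (pow_nonneg hd 2) hη1.le) hs hs''12 hle'' hcard'' hstep
    have e : (d ^ 2 / (1 + η)) ^ 2 ^ t / (1 + η) ^ (2 ^ t - 1)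
        = d ^ 2 ^ (t + 1) / (1 + η) ^ (2 ^ (t + 1) - 1) := by
      have h2p : 0 < 2 ^ t := pow_pos (by norm_num) t
      have e1 : 2 * 2 ^ t = 2 ^ (t + 1) := by rw [pow_succ]; ring
      have e2 : 2 ^ t + (2 ^ t - 1) = 2 ^ (t + 1) - 1 := by omega
      rw [div_pow, ← pow_mul, div_div, ← pow_add, e1, e2]
    rw [← e]
    exact hres

end OctAux

/-- Corollary `relCSoctlow`: if `G` and `Γ` are weighted `k`-partite
`k`-graphs agreeing on all edges of size less than `k`, `s ≥ s′` are vectors in `{1,2}^k`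
with `s` having exactly `t` more `2`-entries than `s′`, `G(Oct(s′)) = d·Γ(Oct(s′))`, and
`Γ` is `η`-minimal, then `G(Oct(s)) ≥ (d^{2^t}/(1+η)^{2^t−1})·Γ(Oct(s))`. -/
theorem rel_cs_oct_lower {k : ℕ} (hk : 2 ≤ k) (V : Fin k → Type*) [∀ j, Fintype (V j)]
    [∀ j, Nonempty (V j)]
    (g γ : (∀ j, Option (V j)) → ℝ) (hg0 : ∀ e, 0 ≤ g e) (hγ0 : ∀ e, 0 ≤ γ e)
    (hagree : ∀ e : ∀ j, Option (V j), (∃ j, e j = none) → g e = γ e)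
    (s s' : Fin k → ℕ) (hs : ∀ j, 1 ≤ s j ∧ s j ≤ 2) (hs' : ∀ j, 1 ≤ s' j ∧ s' j ≤ 2)
    (hle : ∀ j, s' j ≤ s j) (t : ℕ)
    (ht : (Finset.univ.filter fun j => s j = 2).card
        = (Finset.univ.filter fun j => s' j = 2).card + t)
    (d η : ℝ) (hd : 0 ≤ d) (hη : 0 ≤ η)
    (hdens : octCount V g s' = d * octCount V γ s')
    (hmin : IsMinimal V γ η) :
    d ^ (2 ^ t) / (1 + η) ^ (2 ^ t - 1) * octCount V γ s ≤ octCount V g s :=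
  OctAux.main_induction V g γ hg0 hγ0 hagree η hη hmin t s s' d hd hs hs' hle ht
    (by rw [hdens])
end

section
/- Let X, Y, Z be pairwise disjoint vertex sets of size n in a graph G, such that each of the three bipartite graphs induced by the pairs (X,Y), (X,Z), (Y,Z) is ε-regular with density d in Szemerédi's sense, where 0 < ε < d/2 ≤ 1/2. Then the number of triangles with one vertex in each of X, Y, Z is d³n³ up to an additive error of at most ξ·n³, where ξ = 50ε/d² suffices. -/
open Finset

section TriangleAux

variable {V : Type*} (G : SimpleGraph V) [DecidableRel G.Adj]

private lemma interedges_card_sum' (A B : Finset V) :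
    (G.interedges A B).card = ∑ x ∈ A, (B.filter (G.Adj x)).card := by
  classical
  have h : G.interedges A B = (A ×ˢ B).filter fun e => G.Adj e.1 e.2 := by
    ext ⟨a, b⟩
    simp [SimpleGraph.mem_interedges_iff, Finset.mem_filter, Finset.mem_product, and_assoc]
  rw [h, Finset.card_filter, Finset.sum_product]
  exact Finset.sum_congr rfl fun x _ => (Finset.card_filter _ _).symm

private lemma tri_split' (X Y Z : Finset V) :
    (((X ×ˢ Y) ×ˢ Z).filter fun p =>
        G.Adj p.1.1 p.1.2 ∧ G.Adj p.1.1 p.2 ∧ G.Adj p.1.2 p.2).card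
      = ∑ x ∈ X, (G.interedges (Y.filter (G.Adj x)) (Z.filter (G.Adj x))).card := by
  classical
  have h : ∀ x, (G.interedges (Y.filter (G.Adj x)) (Z.filter (G.Adj x)))
      = (Y ×ˢ Z).filter fun q => G.Adj x q.1 ∧ G.Adj x q.2 ∧ G.Adj q.1 q.2 := by
    intro x
    ext ⟨y, z⟩
    simp [SimpleGraph.mem_interedges_iff, Finset.mem_filter, Finset.mem_product]
    tauto
  simp only [h, Finset.card_filter, Finset.sum_product]

end TriangleAux

/-- Szemerédi `ε`-regularity with density `d` of the bipartite graph of `G` between the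
finite vertex sets `A` and `B`. -/
def EpsReg {V : Type*} [Fintype V] [DecidableEq V] (G : SimpleGraph V)
    [DecidableRel G.Adj] (ε d : ℝ) (A B : Finset V) : Prop :=
  ∀ A' ⊆ A, ∀ B' ⊆ B, ε * A.card ≤ A'.card → ε * B.card ≤ B'.card →
    |((G.interedges A' B').card : ℝ) - d * A'.card * B'.card| ≤ ε * A'.card * B'.card

section TriangleBad

variable {V : Type*} [Fintype V] [DecidableEq V] (G : SimpleGraph V) [DecidableRel G.Adj]

private lemma bad_lower (ε d : ℝ) (X W : Finset V) (n : ℕ)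
    (hX : X.card = n) (hW : W.card = n) (hε0 : 0 < ε) (hε1 : ε ≤ 1) (hn : 0 < n)
    (reg : EpsReg G ε d X W) :
    (((X.filter fun x => ((W.filter (G.Adj x)).card : ℝ) < (d - ε) * n).card : ℝ)) ≤ ε * n := by
  classical
  set S := X.filter fun x => ((W.filter (G.Adj x)).card : ℝ) < (d - ε) * n with hS
  by_contra h
  push_neg at h
  have hnR : (0:ℝ) < n := by exact_mod_cast hn
  have hScard : ε * (X.card : ℝ) ≤ S.card := by rw [hX]; linarith
  have hWcard : ε * (W.card : ℝ) ≤ W.card := by rw [hW]; nlinarith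
  have h1 := reg S (filter_subset _ _) W le_rfl hScard hWcard
  rw [abs_le] at h1
  have he : ((G.interedges S W).card : ℝ) = ∑ x ∈ S, ((W.filter (G.Adj x)).card : ℝ) := by
    rw [interedges_card_sum']; push_cast; ring
  have hne : S.Nonempty := by
    rw [← Finset.card_pos]
    by_contra hc
    push_neg at hc
    interval_cases h2 : S.card
    · simp [h2] at h; nlinarith
  have hlt : ((G.interedges S W).card : ℝ) < (d - ε) * n * S.card := by
    rw [he]
    calc ∑ x ∈ S, ((W.filter (G.Adj x)).card : ℝ) < ∑ _x ∈ S, (d - ε) * n := by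
          apply Finset.sum_lt_sum_of_nonempty hne
          intro i hi
          exact (Finset.mem_filter.mp hi).2
      _ = (d - ε) * n * S.card := by rw [Finset.sum_const]; ring
  rw [hW] at h1
  nlinarith [h1.1, h1.2]

private lemma bad_upper (ε d : ℝ) (X W : Finset V) (n : ℕ)
    (hX : X.card = n) (hW : W.card = n) (hε0 : 0 < ε) (hε1 : ε ≤ 1) (hn : 0 < n)
    (reg : EpsReg G ε d X W) :
    (((X.filter fun x => (d + ε) * n < ((W.filter (G.Adj x)).card : ℝ)).card : ℝ)) ≤ ε * n := by
  classical
  set S := X.filter fun x => (d + ε) * n < ((W.filter (G.Adj x)).card : ℝ) with hS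
  by_contra h
  push_neg at h
  have hnR : (0:ℝ) < n := by exact_mod_cast hn
  have hScard : ε * (X.card : ℝ) ≤ S.card := by rw [hX]; linarith
  have hWcard : ε * (W.card : ℝ) ≤ W.card := by rw [hW]; nlinarith
  have h1 := reg S (filter_subset _ _) W le_rfl hScard hWcard
  rw [abs_le] at h1
  have he : ((G.interedges S W).card : ℝ) = ∑ x ∈ S, ((W.filter (G.Adj x)).card : ℝ) := by
    rw [interedges_card_sum']; push_cast; ring
  have hne : S.Nonempty := by
    rw [← Finset.card_pos]
    by_contra hc
    push_neg at hc
    interval_cases h2 : S.card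
    · simp [h2] at h; nlinarith
  have hlt : (d + ε) * n * S.card < ((G.interedges S W).card : ℝ) := by
    rw [he]
    calc (d + ε) * n * (S.card : ℝ) = ∑ _x ∈ S, (d + ε) * n := by rw [Finset.sum_const]; ring
      _ < ∑ x ∈ S, ((W.filter (G.Adj x)).card : ℝ) := by
          apply Finset.sum_lt_sum_of_nonempty hne
          intro i hi
          exact (Finset.mem_filter.mp hi).2
  rw [hW] at h1
  nlinarith [h1.1, h1.2]

end TriangleBad

set_option maxHeartbeats 1600000 in
/-- triangle counting lemma: if `X, Y, Z` are pairwise disjoint vertex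
sets of size `n` in a graph `G` such that each of the three bipartite graphs between them
is `ε`-regular with density `d`, where `0 < ε < d/2 ≤ 1/2`, then the number of triangles
with one vertex in each of `X, Y, Z` is `d³n³` up to an additive error of at most
`ξ·n³` with `ξ = 50ε/d²`. -/
theorem triangle_counting {V : Type*} [Fintype V] [DecidableEq V]
    (G : SimpleGraph V) [DecidableRel G.Adj]
    (X Y Z : Finset V) (n : ℕ)
    (hXY : Disjoint X Y) (hXZ : Disjoint X Z) (hYZ : Disjoint Y Z)
    (hX : X.card = n) (hY : Y.card = n) (hZ : Z.card = n)
    (ε d : ℝ) (hε0 : 0 < ε) (hεd : ε < d / 2) (hd1 : d / 2 ≤ 1 / 2)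
    (hregXY : EpsReg G ε d X Y) (hregXZ : EpsReg G ε d X Z) (hregYZ : EpsReg G ε d Y Z) :
    |(((((X ×ˢ Y) ×ˢ Z).filter fun p =>
          G.Adj p.1.1 p.1.2 ∧ G.Adj p.1.1 p.2 ∧ G.Adj p.1.2 p.2).card : ℝ))
        - d ^ 3 * (n : ℝ) ^ 3|
      ≤ (50 * ε / d ^ 2) * (n : ℝ) ^ 3 := by
  classical
  have hd0 : 0 < d := by linarith
  have hdle1 : d ≤ 1 := by linarith
  have hεhalf : ε < 1 / 2 := by linarith
  have hε1 : ε ≤ 1 := by linarith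
  rcases Nat.eq_zero_or_pos n with hn | hn
  · have hXe : X = ∅ := card_eq_zero.mp (by rw [hX, hn])
    subst hn
    simp [hXe]
  have hnR : (0:ℝ) < n := by exact_mod_cast hn
  set t : V → ℝ :=
    fun x => ((G.interedges (Y.filter (G.Adj x)) (Z.filter (G.Adj x))).card : ℝ) with ht
  have hcount : ((((X ×ˢ Y) ×ˢ Z).filter fun p =>
        G.Adj p.1.1 p.1.2 ∧ G.Adj p.1.1 p.2 ∧ G.Adj p.1.2 p.2).card : ℝ) = ∑ x ∈ X, t x := by
    rw [tri_split']
    push_cast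
    rfl
  set good : V → Prop := fun x =>
    ((d - ε) * n ≤ ((Y.filter (G.Adj x)).card : ℝ) ∧
      ((Y.filter (G.Adj x)).card : ℝ) ≤ (d + ε) * n) ∧
    ((d - ε) * n ≤ ((Z.filter (G.Adj x)).card : ℝ) ∧
      ((Z.filter (G.Adj x)).card : ℝ) ≤ (d + ε) * n) with hgood
  -- bad set has small cardinality
  have hbadY1 := bad_lower G ε d X Y n hX hY hε0 hε1 hn hregXY
  have hbadY2 := bad_upper G ε d X Y n hX hY hε0 hε1 hn hregXY
  have hbadZ1 := bad_lower G ε d X Z n hX hZ hε0 hε1 hn hregXZ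
  have hbadZ2 := bad_upper G ε d X Z n hX hZ hε0 hε1 hn hregXZ
  have hbadsub : X.filter (fun x => ¬ good x) ⊆
      ((X.filter fun x => ((Y.filter (G.Adj x)).card : ℝ) < (d - ε) * n)
      ∪ (X.filter fun x => (d + ε) * n < ((Y.filter (G.Adj x)).card : ℝ)))
      ∪ ((X.filter fun x => ((Z.filter (G.Adj x)).card : ℝ) < (d - ε) * n)
      ∪ (X.filter fun x => (d + ε) * n < ((Z.filter (G.Adj x)).card : ℝ))) := by
    intro x hx
    rw [mem_filter] at hx
    obtain ⟨hxX, hbad⟩ := hx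
    simp only [hgood, not_and_or, not_le] at hbad
    simp only [mem_union, mem_filter]
    tauto
  have hbadcard : ((X.filter fun x => ¬ good x).card : ℝ) ≤ 4 * ε * n := by
    have h1 := card_le_card hbadsub
    have h2 := card_union_le
      ((X.filter fun x => ((Y.filter (G.Adj x)).card : ℝ) < (d - ε) * n)
      ∪ (X.filter fun x => (d + ε) * n < ((Y.filter (G.Adj x)).card : ℝ)))
      ((X.filter fun x => ((Z.filter (G.Adj x)).card : ℝ) < (d - ε) * n)
      ∪ (X.filter fun x => (d + ε) * n < ((Z.filter (G.Adj x)).card : ℝ)))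
    have h3 := card_union_le
      (X.filter fun x => ((Y.filter (G.Adj x)).card : ℝ) < (d - ε) * n)
      (X.filter fun x => (d + ε) * n < ((Y.filter (G.Adj x)).card : ℝ))
    have h4 := card_union_le
      (X.filter fun x => ((Z.filter (G.Adj x)).card : ℝ) < (d - ε) * n)
      (X.filter fun x => (d + ε) * n < ((Z.filter (G.Adj x)).card : ℝ))
    have hnat : (X.filter fun x => ¬ good x).card
        ≤ (X.filter fun x => ((Y.filter (G.Adj x)).card : ℝ) < (d - ε) * n).card
        + (X.filter fun x => (d + ε) * n < ((Y.filter (G.Adj x)).card : ℝ)).card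
        + ((X.filter fun x => ((Z.filter (G.Adj x)).card : ℝ) < (d - ε) * n).card
        + (X.filter fun x => (d + ε) * n < ((Z.filter (G.Adj x)).card : ℝ)).card) :=
      le_trans h1 (le_trans h2 (add_le_add h3 h4))
    have h5 : ((X.filter fun x => ¬ good x).card : ℝ)
        ≤ ((X.filter fun x => ((Y.filter (G.Adj x)).card : ℝ) < (d - ε) * n).card : ℝ)
        + ((X.filter fun x => (d + ε) * n < ((Y.filter (G.Adj x)).card : ℝ)).card : ℝ)
        + (((X.filter fun x => ((Z.filter (G.Adj x)).card : ℝ) < (d - ε) * n).card : ℝ)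
        + ((X.filter fun x => (d + ε) * n < ((Z.filter (G.Adj x)).card : ℝ)).card : ℝ)) := by
      exact_mod_cast hnat
    linarith
  -- per-vertex trivial bound
  have htriv : ∀ x ∈ X, |t x - d ^ 3 * (n:ℝ) ^ 2| ≤ 2 * (n:ℝ) ^ 2 := by
    intro x _
    have h1 : (G.interedges (Y.filter (G.Adj x)) (Z.filter (G.Adj x))).card
        ≤ (Y.filter (G.Adj x)).card * (Z.filter (G.Adj x)).card :=
      Rel.card_interedges_le_mul _ _ _
    have hYf : (Y.filter (G.Adj x)).card ≤ n := by
      rw [← hY]; exact card_le_card (filter_subset _ _)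
    have hZf : (Z.filter (G.Adj x)).card ≤ n := by
      rw [← hZ]; exact card_le_card (filter_subset _ _)
    have h2 : t x ≤ (n:ℝ) * n := by
      have h2' : (G.interedges (Y.filter (G.Adj x)) (Z.filter (G.Adj x))).card ≤ n * n :=
        le_trans h1 (Nat.mul_le_mul hYf hZf)
      show ((G.interedges (Y.filter (G.Adj x)) (Z.filter (G.Adj x))).card : ℝ) ≤ (n:ℝ) * n
      exact_mod_cast h2'
    have h3 : 0 ≤ t x := Nat.cast_nonneg _
    have hd3 : d ^ 3 ≤ 1 := pow_le_one₀ hd0.le hdle1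
    have h4 : d ^ 3 * (n:ℝ) ^ 2 ≤ (n:ℝ) ^ 2 := by nlinarith [sq_nonneg (n:ℝ)]
    have hsq : (n:ℝ) * n = (n:ℝ) ^ 2 := by ring
    have h5 : 0 ≤ d ^ 3 * (n:ℝ) ^ 2 := by positivity
    rw [abs_le]
    constructor <;> linarith
  -- per-vertex good bound
  have hgoodest : ∀ x ∈ X.filter good, |t x - d ^ 3 * (n:ℝ) ^ 2| ≤ 4 * ε * (n:ℝ) ^ 2 := by
    intro x hx
    obtain ⟨hxX, hg⟩ := mem_filter.mp hx
    set a := ((Y.filter (G.Adj x)).card : ℝ) with ha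
    set b := ((Z.filter (G.Adj x)).card : ℝ) with hb
    obtain ⟨⟨ha1, ha2⟩, ⟨hb1, hb2⟩⟩ := hg
    have ha0 : (0:ℝ) ≤ a := Nat.cast_nonneg _
    have hb0 : (0:ℝ) ≤ b := Nat.cast_nonneg _
    have han : a ≤ n := by
      rw [ha, ← hY]; exact_mod_cast card_le_card (filter_subset _ _)
    have hbn : b ≤ n := by
      rw [hb, ← hZ]; exact_mod_cast card_le_card (filter_subset _ _)
    have h1 := hregYZ (Y.filter (G.Adj x)) (filter_subset _ _)
      (Z.filter (G.Adj x)) (filter_subset _ _)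
      (by rw [hY, ← ha]; nlinarith) (by rw [hZ, ← hb]; nlinarith)
    rw [← ha, ← hb] at h1
    replace h1 : |t x - d * a * b| ≤ ε * a * b := h1
    rw [abs_le] at h1 ⊢
    have k1 : a * b ≤ (d + ε) * n * ((d + ε) * n) :=
      mul_le_mul ha2 hb2 hb0 (by positivity)
    have k2 : a * b ≤ (n:ℝ) * n := mul_le_mul han hbn hb0 hnR.le
    have k3 : (d - ε) * n * ((d - ε) * n) ≤ a * b :=
      mul_le_mul ha1 hb1 (by nlinarith) ha0
    have k4 : d * (a * b) ≤ d * ((d + ε) * n * ((d + ε) * n)) :=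
      mul_le_mul_of_nonneg_left k1 hd0.le
    have k5 : ε * (a * b) ≤ ε * ((n:ℝ) * n) :=
      mul_le_mul_of_nonneg_left k2 hε0.le
    have k6 : d * ((d - ε) * n * ((d - ε) * n)) ≤ d * (a * b) :=
      mul_le_mul_of_nonneg_left k3 hd0.le
    constructor
    · nlinarith [h1.1, sq_nonneg (n:ℝ), mul_pos hnR hnR]
    · nlinarith [h1.2, sq_nonneg (n:ℝ), mul_pos hnR hnR]
  -- combine
  have key : (∑ x ∈ X, t x) - d ^ 3 * (n:ℝ) ^ 3 = ∑ x ∈ X, (t x - d ^ 3 * (n:ℝ) ^ 2) := by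
    rw [Finset.sum_sub_distrib, Finset.sum_const, hX, nsmul_eq_mul]
    ring
  rw [hcount, key]
  have hga : ((X.filter good).card : ℝ) ≤ n := by
    have h := card_le_card (filter_subset good X)
    rw [hX] at h
    exact_mod_cast h
  have hs1 : ∑ x ∈ X.filter good, |t x - d ^ 3 * (n:ℝ) ^ 2|
      ≤ ((X.filter good).card : ℝ) * (4 * ε * (n:ℝ) ^ 2) := by
    have := Finset.sum_le_card_nsmul (X.filter good)
      (fun x => |t x - d ^ 3 * (n:ℝ) ^ 2|) (4 * ε * (n:ℝ) ^ 2) hgoodest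
    rwa [nsmul_eq_mul] at this
  have hs2 : ∑ x ∈ X.filter (fun x => ¬ good x), |t x - d ^ 3 * (n:ℝ) ^ 2|
      ≤ ((X.filter fun x => ¬ good x).card : ℝ) * (2 * (n:ℝ) ^ 2) := by
    have := Finset.sum_le_card_nsmul (X.filter fun x => ¬ good x)
      (fun x => |t x - d ^ 3 * (n:ℝ) ^ 2|) (2 * (n:ℝ) ^ 2)
      (fun x hx => htriv x (mem_filter.mp hx).1)
    rwa [nsmul_eq_mul] at this
  have hsplit : ∑ x ∈ X, |t x - d ^ 3 * (n:ℝ) ^ 2|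
      = ∑ x ∈ X.filter good, |t x - d ^ 3 * (n:ℝ) ^ 2|
      + ∑ x ∈ X.filter (fun x => ¬ good x), |t x - d ^ 3 * (n:ℝ) ^ 2| :=
    (Finset.sum_filter_add_sum_filter_not X good _).symm
  have habs := Finset.abs_sum_le_sum_abs (fun x => t x - d ^ 3 * (n:ℝ) ^ 2) X
  have hfin : ((X.filter good).card : ℝ) * (4 * ε * (n:ℝ) ^ 2)
      + ((X.filter fun x => ¬ good x).card : ℝ) * (2 * (n:ℝ) ^ 2)
      ≤ (50 * ε / d ^ 2) * (n:ℝ) ^ 3 := by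
    have hd2 : (0:ℝ) < d ^ 2 := by positivity
    have h50 : 50 * ε ≤ 50 * ε / d ^ 2 := by
      rw [le_div_iff₀ hd2]
      nlinarith [mul_nonneg (mul_nonneg hε0.le (sub_nonneg.2 hdle1))
        (by linarith : (0:ℝ) ≤ 1 + d)]
    have hlhs : ((X.filter good).card : ℝ) * (4 * ε * (n:ℝ) ^ 2)
        + ((X.filter fun x => ¬ good x).card : ℝ) * (2 * (n:ℝ) ^ 2)
        ≤ (n:ℝ) * (4 * ε * (n:ℝ) ^ 2) + (4 * ε * n) * (2 * (n:ℝ) ^ 2) :=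
      add_le_add (mul_le_mul_of_nonneg_right hga (by positivity))
        (mul_le_mul_of_nonneg_right hbadcard (by positivity))
    have hn3 : (0:ℝ) ≤ (n:ℝ) ^ 3 := by positivity
    have step1 : (n:ℝ) * (4 * ε * (n:ℝ) ^ 2) + (4 * ε * n) * (2 * (n:ℝ) ^ 2)
        = 12 * ε * (n:ℝ) ^ 3 := by ring
    have step2 : 12 * ε * (n:ℝ) ^ 3 ≤ 50 * ε * (n:ℝ) ^ 3 := by nlinarith
    have step3 : 50 * ε * (n:ℝ) ^ 3 ≤ (50 * ε / d ^ 2) * (n:ℝ) ^ 3 :=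
      mul_le_mul_of_nonneg_right h50 hn3
    linarith
  calc |∑ x ∈ X, (t x - d ^ 3 * (n:ℝ) ^ 2)| ≤ ∑ x ∈ X, |t x - d ^ 3 * (n:ℝ) ^ 2| := habs
    _ = _ := hsplit
    _ ≤ _ := add_le_add hs1 hs2
    _ ≤ (50 * ε / d ^ 2) * (n:ℝ) ^ 3 := hfin
end
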